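/- Let (P, Q, R) be a triple of pairwise disjoint sets with P ∪ Q ∪ R = {1, …, N} and |Q| ≥ 1, and write |T[P]| = ∏_{m ∈ P} K_m · ∏_{m ∉ P} L_m. Then the optimal partial TTM-tree cost opt(P, Q, R) satisfies the following recurrence: (a) if |Q| = 1 and R = ∅ then opt(P, Q, R) = 0; (b) otherwise, opt(P, Q, R) equals the minimum of the following available options: the reuse option, available when R ≠ ∅, which equals min over n ∈ R of K_n · |T[P]| + opt(P ∪ {n}, Q, R ∖ {n}); and the split option, available when |Q| ≥ 2, which equals min over partitions Q = Q₁ ⊎ Q₂ with Q₁, Q₂ ≠ ∅ of opt(P, Q₁, R) + opt(P, Q₂, R). -/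

import Mathlib

/-- A finite rooted labeled tree, the combinatorial skeleton of a TTM-tree for
an `N`-dimensional tensor.  Every node stores its parent (the root being its
own parent) and every node reaches the root by iterating `parent`.  The label
of a non-root node is a mode in `{1, …, N}` (for a leaf, it designates the new
factor matrix computed at that leaf); the root's label is ignored. -/
structure TTMTree (N : ℕ) where
  V : Type
  fintypeV : Fintype V
  decEqV : DecidableEq V
  root : V
  parent : V → V
  parent_root : parent root = root
  reaches_root : ∀ v : V, ∃ k : ℕ, parent^[k] v = root
  label : V → Fin N

attribute [instance] TTMTree.fintypeV TTMTree.decEqV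

namespace TTMTree

variable {N : ℕ}

/-- A leaf: a node other than the root having no children. -/
def IsLeaf (H : TTMTree N) (v : H.V) : Prop :=
  v ≠ H.root ∧ ∀ u : H.V, u ≠ v → H.parent u ≠ v

/-- An internal node: a node that is neither the root nor a leaf. -/
def IsInternal (H : TTMTree N) (v : H.V) : Prop :=
  v ≠ H.root ∧ ¬ H.IsLeaf v

/-- `u` lies on the path from the root to `v`, i.e. `u` is an ancestor of `v`
(inclusively: `v` is an ancestor of itself). -/
def IsAncestor (H : TTMTree N) (u v : H.V) : Prop :=
  ∃ k : ℕ, H.parent^[k] v = u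


end TTMTree

namespace TTMTree

variable {N : ℕ}

/-- The depth of a node: the least `k` with `parent^[k] v = root`. -/
noncomputable def depth (H : TTMTree N) (v : H.V) : ℕ :=
  @Nat.find (fun k => H.parent^[k] v = H.root) (Classical.decPred _)
    (H.reaches_root v)

/-- Fuel-based helper for the cardinality function with root cardinality `c₀`. -/
noncomputable def outAux (c₀ : ℚ) (L K : Fin N → ℕ) (H : TTMTree N) :
    ℕ → H.V → ℚ
  | 0, _ => c₀
  | k + 1, v =>
      if v = H.root then c₀
      else ((K (H.label v) : ℚ) / (L (H.label v) : ℚ)) *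
        outAux c₀ L K H k (H.parent v)

/-- The cardinality `Out(v)` of the tensor output at node `v`, when the root
outputs a tensor of cardinality `c₀`:  `Out(root) = c₀` and
`Out(v) = (K m / L m) · Out(parent v)` for a non-root node `v` labeled `m`. -/
noncomputable def out (c₀ : ℚ) (L K : Fin N → ℕ) (H : TTMTree N) (v : H.V) :
    ℚ :=
  H.outAux c₀ L K (H.depth v) v

/-- The set of internal nodes of `H`. -/
noncomputable def internals (H : TTMTree N) : Finset H.V :=
  letI := Classical.decPred H.IsInternal
  Finset.univ.filter H.IsInternal

/-- The cost of the tree when the root tensor has cardinality `c₀`: each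
internal node labeled `m` costs `K m · In(u)` with `In(u) = Out(parent u)`,
summed over all internal nodes. -/
noncomputable def cost (c₀ : ℚ) (L K : Fin N → ℕ) (H : TTMTree N) : ℚ :=
  ∑ v ∈ H.internals, (K (H.label v) : ℚ) * H.out c₀ L K (H.parent v)

end TTMTree

/-- `|T[P]|`: the cardinality of the tensor obtained from the input tensor by
multiplying along all modes of `P`, namely `∏_{m ∈ P} K m · ∏_{m ∉ P} L m`. -/
def rootCard {N : ℕ} (L K : Fin N → ℕ) (P : Finset (Fin N)) : ℚ :=
  (∏ m ∈ P, (K m : ℚ)) * ∏ m ∈ Pᶜ, (L m : ℚ)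

/-- `H` is a partial TTM-tree for the pair `(P, Q)` (the set `R` of reusable
modes plays no role in the definition): (ii) there are exactly `|Q|` leaves,
each labeled by a distinct mode of `Q`; (iii) every internal node is labeled
by a mode outside `P`; (iv) for every leaf labeled `n`, the path from the root
to the leaf contains exactly `N - |P| - 1` internal nodes, and all the modes
outside `P ∪ {n}` appear among their labels. -/
def PartialValid {N : ℕ} (P Q : Finset (Fin N)) (H : TTMTree N) : Prop :=
  (∀ n ∈ Q, ∃! v : H.V, H.IsLeaf v ∧ H.label v = n) ∧
  (∀ v : H.V, H.IsLeaf v → H.label v ∈ Q) ∧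
  (∀ v : H.V, H.IsInternal v → H.label v ∉ P) ∧
  (∀ v : H.V, H.IsLeaf v →
    ∃ A : Finset H.V,
      (∀ u : H.V, u ∈ A ↔ (H.IsAncestor u v ∧ H.IsInternal u)) ∧
      A.card = N - P.card - 1 ∧
      (∀ m : Fin N, m ∉ P → m ≠ H.label v → ∃ u ∈ A, H.label u = m))

/-- The cost of a partial TTM-tree for `(P, Q)`: its root outputs the tensor
`T[P]` of cardinality `∏_{m ∈ P} K m · ∏_{m ∉ P} L m`. -/
noncomputable def pcost {N : ℕ} (L K : Fin N → ℕ) (P : Finset (Fin N))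
    (H : TTMTree N) : ℚ :=
  TTMTree.cost (rootCard L K P) L K H
namespace TTMTree

variable {N : ℕ} (H : TTMTree N)

lemma iterate_depth : H.parent^[H.depth v] v = H.root :=
  @Nat.find_spec (fun k => H.parent^[k] v = H.root) (Classical.decPred _) (H.reaches_root v)

lemma iterate_ne_root {v : H.V} {k : ℕ} (hk : k < H.depth v) :
    H.parent^[k] v ≠ H.root :=
  @Nat.find_min (fun k => H.parent^[k] v = H.root) (Classical.decPred _) (H.reaches_root v) _ hk

lemma depth_root : H.depth H.root = 0 := by
  by_contra h
  exact H.iterate_ne_root (Nat.pos_of_ne_zero h) rfl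

lemma parent_iterate_root (k : ℕ) : H.parent^[k] H.root = H.root := by
  induction k with
  | zero => rfl
  | succ k ih => rw [Function.iterate_succ_apply', ih, H.parent_root]

lemma depth_eq_zero_iff {v : H.V} : H.depth v = 0 ↔ v = H.root := by
  constructor
  · intro h
    have := H.iterate_depth (v := v)
    rwa [h] at this
  · rintro rfl; exact H.depth_root

lemma depth_parent {v : H.V} (hv : v ≠ H.root) :
    H.depth v = H.depth (H.parent v) + 1 := by
  have h1 : H.depth v ≠ 0 := fun h => hv (H.depth_eq_zero_iff.mp h)
  obtain ⟨d, hd⟩ : ∃ d, H.depth v = d + 1 := ⟨H.depth v - 1, (Nat.succ_pred_eq_of_pos (Nat.pos_of_ne_zero h1)).symm⟩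
  have hspec : H.parent^[d] (H.parent v) = H.root := by
    have := H.iterate_depth (v := v); rwa [hd, Function.iterate_succ_apply] at this
  have hle : H.depth (H.parent v) ≤ d :=
    @Nat.find_le _ _ (Classical.decPred _) ⟨_, hspec⟩ hspec
  have hge : d ≤ H.depth (H.parent v) := by
    by_contra h
    push_neg at h
    have : H.parent^[H.depth (H.parent v) + 1] v = H.root := by
      rw [Function.iterate_succ_apply]; exact H.iterate_depth
    have := H.iterate_ne_root (v := v) (k := H.depth (H.parent v) + 1) (by omega)
    exact this ‹_›
  omega

lemma iterate_of_ge {v : H.V} {k : ℕ} (hk : H.depth v ≤ k) :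
    H.parent^[k] v = H.root := by
  obtain ⟨j, rfl⟩ := Nat.exists_eq_add_of_le hk
  rw [Nat.add_comm, Function.iterate_add_apply, H.iterate_depth, H.parent_iterate_root]

lemma out_root (c₀ : ℚ) (L K : Fin N → ℕ) : H.out c₀ L K H.root = c₀ := by
  rw [out, H.depth_root]; rfl

lemma out_ne_root (c₀ : ℚ) (L K : Fin N → ℕ) {v : H.V} (hv : v ≠ H.root) :
    H.out c₀ L K v =
      ((K (H.label v) : ℚ) / (L (H.label v) : ℚ)) * H.out c₀ L K (H.parent v) := by
  rw [out, out, H.depth_parent hv, outAux, if_neg hv]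

lemma depth_iterate {v : H.V} {k : ℕ} (hk : k ≤ H.depth v) :
    H.depth (H.parent^[k] v) = H.depth v - k := by
  induction k with
  | zero => simp
  | succ k ih =>
    have hklt : k < H.depth v := hk
    have h1 := ih (Nat.le_of_lt hklt)
    have hne : H.parent^[k] v ≠ H.root := H.iterate_ne_root hklt
    have := H.depth_parent hne
    rw [show k+1 = 1+k by omega, Function.iterate_add_apply]
    rw [show H.parent^[1] (H.parent^[k] v) = H.parent (H.parent^[k] v) from rfl]
    omega

lemma isAncestor_iff {u v : H.V} :
    H.IsAncestor u v ↔ ∃ k ≤ H.depth v, H.parent^[k] v = u := by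
  constructor
  · rintro ⟨k, rfl⟩
    rcases le_or_gt k (H.depth v) with h | h
    · exact ⟨k, h, rfl⟩
    · exact ⟨H.depth v, le_refl _, by rw [H.iterate_of_ge (le_of_lt h), H.iterate_of_ge (le_refl _)]⟩
  · rintro ⟨k, _, rfl⟩; exact ⟨k, rfl⟩

lemma isAncestor_root (v : H.V) : H.IsAncestor H.root v := ⟨H.depth v, H.iterate_depth⟩

lemma isAncestor_refl (v : H.V) : H.IsAncestor v v := ⟨0, rfl⟩

lemma isAncestor_parent {v : H.V} : H.IsAncestor (H.parent v) v := ⟨1, rfl⟩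

lemma isAncestor_trans {u v w : H.V} (h1 : H.IsAncestor u v) (h2 : H.IsAncestor v w) :
    H.IsAncestor u w := by
  obtain ⟨k, rfl⟩ := h1; obtain ⟨j, rfl⟩ := h2
  exact ⟨k + j, Function.iterate_add_apply _ _ _ _⟩

lemma eq_root_of_isAncestor {u : H.V} (h : H.IsAncestor u H.root) : u = H.root := by
  obtain ⟨k, rfl⟩ := h; exact H.parent_iterate_root k

lemma depth_le_of_isAncestor {u v : H.V} (h : H.IsAncestor u v) : H.depth u ≤ H.depth v := by
  rw [isAncestor_iff] at h
  obtain ⟨k, hk, rfl⟩ := h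
  rw [H.depth_iterate hk]; omega

/-- the position of an ancestor is determined by its depth -/
lemma iterate_eq_of_isAncestor {u v : H.V} (h : H.IsAncestor u v) :
    H.parent^[H.depth v - H.depth u] v = u := by
  rw [isAncestor_iff] at h
  obtain ⟨k, hk, rfl⟩ := h
  rw [H.depth_iterate hk]
  congr 1
  omega

lemma out_nonneg {c₀ : ℚ} (hc : 0 ≤ c₀) (L K : Fin N → ℕ) (v : H.V) :
    0 ≤ H.out c₀ L K v := by
  generalize hd : H.depth v = d
  induction d generalizing v with
  | zero => rw [H.depth_eq_zero_iff.mp hd, H.out_root]; exact hc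
  | succ d ih =>
    have hv : v ≠ H.root := by
      intro h; rw [h, H.depth_root] at hd; omega
    rw [H.out_ne_root _ _ _ hv]
    have : H.depth (H.parent v) = d := by have := H.depth_parent hv; omega
    exact mul_nonneg (div_nonneg (Nat.cast_nonneg _) (Nat.cast_nonneg _)) (ih _ this)

end TTMTree
namespace TTMTree

variable {N : ℕ} (H : TTMTree N)

lemma exists_leaf_desc {v : H.V} (hv : v ≠ H.root) :
    ∃ w, H.IsLeaf w ∧ H.IsAncestor v w := by
  classical
  obtain ⟨w, hw, hmax⟩ := Finset.exists_max_image
    (Finset.univ.filter (fun w => H.IsAncestor v w)) H.depth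
    ⟨v, by simp [H.isAncestor_refl]⟩
  rw [Finset.mem_filter] at hw
  have hwroot : w ≠ H.root := by
    rintro rfl
    exact hv (H.eq_root_of_isAncestor hw.2)
  refine ⟨w, ⟨hwroot, fun u hu hpu => ?_⟩, hw.2⟩
  have huroot : u ≠ H.root := by
    rintro rfl; rw [H.parent_root] at hpu; exact hwroot hpu.symm
  have hanc : H.IsAncestor v u :=
    H.isAncestor_trans hw.2 (hpu ▸ H.isAncestor_parent)
  have := hmax u (by simp [hanc])
  have := H.depth_parent huroot
  rw [hpu] at this
  omega

lemma exists_child {v : H.V} (hv : v ≠ H.root) :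
    ∃ c, H.parent c = H.root ∧ c ≠ H.root ∧ H.IsAncestor c v := by
  have hd : 1 ≤ H.depth v := by
    rcases Nat.eq_zero_or_pos (H.depth v) with h | h
    · exact absurd (H.depth_eq_zero_iff.mp h) hv
    · exact h
  refine ⟨H.parent^[H.depth v - 1] v, ?_, H.iterate_ne_root (by omega), ⟨_, rfl⟩⟩
  have : H.parent^[H.depth v - 1 + 1] v = H.root := by
    rw [show H.depth v - 1 + 1 = H.depth v by omega]; exact H.iterate_depth
  rwa [Function.iterate_succ_apply'] at this

lemma depth_child {c : H.V} (h : H.parent c = H.root) (hc : c ≠ H.root) :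
    H.depth c = 1 := by
  rw [H.depth_parent hc, h, H.depth_root]

/-- For a child `c` of the root which is an ancestor of `v`, `c` is the
depth-1 node on the path of `v`. -/
lemma child_ancestor_eq {c v : H.V} (h : H.parent c = H.root) (hc : c ≠ H.root)
    (hanc : H.IsAncestor c v) : H.parent^[H.depth v - 1] v = c := by
  have := H.iterate_eq_of_isAncestor hanc
  rwa [H.depth_child h hc] at this

end TTMTree

/-- Structure of the ancestor set of a leaf in a valid tree: the labels of the
internal ancestors are exactly the modes outside `P ∪ {label v}`, each
appearing exactly once. -/
lemma valid_A {N : ℕ} {P Q : Finset (Fin N)} {H : TTMTree N}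
    (hval : PartialValid P Q H) (hPQ : Disjoint P Q) {v : H.V}
    (hv : H.IsLeaf v) :
    ∃ A : Finset H.V,
      (∀ u : H.V, u ∈ A ↔ (H.IsAncestor u v ∧ H.IsInternal u)) ∧
      A.card = N - P.card - 1 ∧
      A.image H.label = (insert (H.label v) P)ᶜ ∧
      Set.InjOn H.label A := by
  classical
  obtain ⟨h1, h2, h3, h4⟩ := hval
  obtain ⟨A, hA, hcard, hcov⟩ := h4 v hv
  have hlv : H.label v ∉ P := Finset.disjoint_left.mp hPQ.symm (h2 v hv)
  have hreq : ((insert (H.label v) P)ᶜ : Finset (Fin N)).card = N - P.card - 1 := by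
    rw [Finset.card_compl, Finset.card_insert_of_notMem hlv, Fintype.card_fin]
    omega
  have hsub : (insert (H.label v) P)ᶜ ⊆ A.image H.label := by
    intro m hm
    rw [Finset.mem_compl, Finset.mem_insert, not_or] at hm
    obtain ⟨u, hu, hlab⟩ := hcov m hm.2 hm.1
    exact Finset.mem_image.mpr ⟨u, hu, hlab⟩
  have him : A.image H.label = (insert (H.label v) P)ᶜ := by
    apply (Finset.eq_of_subset_of_card_le hsub ?_).symm
    calc (A.image H.label).card ≤ A.card := Finset.card_image_le
      _ = ((insert (H.label v) P)ᶜ : Finset (Fin N)).card := by rw [hcard, hreq]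
  have hinj : Set.InjOn H.label A := by
    rw [← Finset.card_image_iff, him, hreq, hcard]
  exact ⟨A, hA, hcard, him, hinj⟩
lemma rootCard_nonneg {N : ℕ} (L K : Fin N → ℕ) (P : Finset (Fin N)) :
    0 ≤ rootCard L K P :=
  mul_nonneg (Finset.prod_nonneg fun _ _ => Nat.cast_nonneg _)
    (Finset.prod_nonneg fun _ _ => Nat.cast_nonneg _)

lemma pcost_nonneg {N : ℕ} (L K : Fin N → ℕ) (P : Finset (Fin N))
    (H : TTMTree N) : 0 ≤ pcost L K P H := by
  apply Finset.sum_nonneg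
  intro v _
  exact mul_nonneg (Nat.cast_nonneg _)
    (H.out_nonneg (rootCard_nonneg L K P) L K _)

/-- The two-node tree: a root and a single leaf labeled `n`. -/
noncomputable def twoNode (N : ℕ) (n : Fin N) : TTMTree N where
  V := Bool
  fintypeV := inferInstance
  decEqV := inferInstance
  root := false
  parent := fun _ => false
  parent_root := rfl
  reaches_root := fun _ => ⟨1, rfl⟩
  label := fun _ => n

lemma twoNode_isLeaf_iff {N : ℕ} (n : Fin N) (v : Bool) :
    (twoNode N n).IsLeaf v ↔ v = true := by
  constructor
  · intro h
    rcases v with _ | _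
    · exact absurd rfl h.1
    · rfl
  · rintro rfl
    exact ⟨fun h => Bool.noConfusion h, fun u _ h => Bool.noConfusion h⟩

lemma twoNode_internals {N : ℕ} (n : Fin N) : (twoNode N n).internals = ∅ := by
  ext v
  simp only [TTMTree.internals, Finset.mem_filter, Finset.notMem_empty, iff_false]
  rintro ⟨-, ⟨hroot, hleaf⟩⟩
  rcases v with _ | _
  · exact hroot rfl
  · exact hleaf ((twoNode_isLeaf_iff n true).mpr rfl)

lemma twoNode_pcost {N : ℕ} (L K : Fin N → ℕ) (P : Finset (Fin N)) (n : Fin N) :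
    pcost L K P (twoNode N n) = 0 := by
  rw [pcost, TTMTree.cost, twoNode_internals, Finset.sum_empty]

lemma twoNode_valid {N : ℕ} (P : Finset (Fin N)) (n : Fin N) (hn : n ∉ P)
    (huniv : insert n P = Finset.univ) :
    PartialValid P {n} (twoNode N n) := by
  have hPcard : P.card = N - 1 ∧ 1 ≤ N := by
    have h1 : (insert n P).card = P.card + 1 := Finset.card_insert_of_notMem hn
    have h2 : (insert n P).card = N := by rw [huniv, Finset.card_univ, Fintype.card_fin]
    omega
  refine ⟨?_, ?_, ?_, ?_⟩
  · intro m hm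
    rw [Finset.mem_singleton] at hm
    subst hm
    refine ⟨true, ⟨(twoNode_isLeaf_iff _ _).mpr rfl, rfl⟩, ?_⟩
    rintro v ⟨hv, -⟩
    exact (twoNode_isLeaf_iff _ _).mp hv
  · intro v _
    exact Finset.mem_singleton_self n
  · rintro v ⟨hroot, hleaf⟩
    rcases v with _ | _
    · exact absurd rfl hroot
    · exact absurd ((twoNode_isLeaf_iff n true).mpr rfl) hleaf
  · intro v hv
    refine ⟨∅, ?_, by rw [Finset.card_empty]; omega, ?_⟩
    · intro u
      simp only [Finset.notMem_empty, false_iff, not_and]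
      rintro - ⟨hroot, hleaf⟩
      rcases u with _ | _
      · exact hroot rfl
      · exact hleaf ((twoNode_isLeaf_iff n true).mpr rfl)
    · intro m hmP hmn
      exact absurd (huniv ▸ Finset.mem_univ m) (by simp only [Finset.mem_insert, not_or]; exact ⟨hmn, hmP⟩)
section AddChild

variable {N : ℕ} (H : TTMTree N) (n : Fin N)

/-- Parent function for `addChild`: the new node `none` becomes the unique
child of the root, and the old children of the root are re-attached to it. -/
noncomputable def acParent : Option H.V → Option H.V := fun x =>
  match x with
  | none => some H.root
  | some v =>
      if v = H.root then some H.root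
      else if H.parent v = H.root then none else some (H.parent v)

lemma acParent_none : acParent H none = some H.root := rfl

lemma acParent_root : acParent H (some H.root) = some H.root := by
  simp [acParent]

lemma acParent_to_new {v : H.V} (hv : v ≠ H.root) (hp : H.parent v = H.root) :
    acParent H (some v) = none := by
  simp [acParent, hv, hp]

lemma acParent_deep {v : H.V} (hv : v ≠ H.root) (hp : H.parent v ≠ H.root) :
    acParent H (some v) = some (H.parent v) := by
  simp [acParent, hv, hp]

/-- The tree obtained from `H` by inserting a new node labeled `n` between
the root and its children. -/
@[reducible] noncomputable def addChild : TTMTree N where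
  V := Option H.V
  fintypeV := inferInstance
  decEqV := inferInstance
  root := some H.root
  parent := acParent H
  parent_root := acParent_root H
  reaches_root := by
    have key : ∀ d (v : H.V), H.depth v = d →
        ∃ k, (acParent H)^[k] (some v) = some H.root := by
      intro d
      induction d using Nat.strong_induction_on with
      | _ d ih =>
        intro v hd
        by_cases hv : v = H.root
        · subst hv; exact ⟨0, rfl⟩
        by_cases hp : H.parent v = H.root
        · refine ⟨2, ?_⟩
          show acParent H (acParent H (some v)) = some H.root
          rw [acParent_to_new H hv hp, acParent_none]
        · obtain ⟨k, hk⟩ := ih (H.depth (H.parent v))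
            (by rw [← hd, H.depth_parent hv]; omega) (H.parent v) rfl
          exact ⟨k + 1, by
            rw [Function.iterate_succ_apply, acParent_deep H hv hp, hk]⟩
    intro x
    cases x with
    | none =>
      exact ⟨1, by rw [Function.iterate_one, acParent_none]⟩
    | some v => exact key _ v rfl
  label := fun x => x.elim n H.label

lemma addChild_root : (addChild H n).root = some H.root := rfl

lemma addChild_parent : (addChild H n).parent = acParent H := rfl

lemma addChild_label_some (v : H.V) : (addChild H n).label (some v) = H.label v := rfl

lemma addChild_label_none : (addChild H n).label none = n := rfl

lemma addChild_isLeaf_some {v : H.V} :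
    (addChild H n).IsLeaf (some v) ↔ H.IsLeaf v := by
  constructor
  · rintro ⟨h1, h2⟩
    have hv : v ≠ H.root := fun h => h1 (by rw [h, addChild_root])
    refine ⟨hv, fun u hu hp => ?_⟩
    have hu' : u ≠ H.root := by rintro rfl; rw [H.parent_root] at hp; exact hv hp.symm
    have : acParent H (some u) = some v := by
      by_cases hur : H.parent u = H.root
      · exfalso; rw [hur] at hp; exact hv hp.symm
      · rw [acParent_deep H hu' hur, hp]
    exact h2 (some u) (fun h => hu (Option.some.inj h)) this
  · rintro ⟨h1, h2⟩
    refine ⟨fun h => h1 (Option.some.inj h), fun u hu hp => ?_⟩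
    cases u with
    | none => rw [addChild_parent, acParent_none] at hp; exact h1 (Option.some.inj hp).symm
    | some u =>
      rw [addChild_parent] at hp
      by_cases hu' : u = H.root
      · rw [hu', acParent_root] at hp; exact h1 (Option.some.inj hp).symm
      by_cases hur : H.parent u = H.root
      · rw [acParent_to_new H hu' hur] at hp; exact (nomatch hp)
      · rw [acParent_deep H hu' hur] at hp
        exact h2 u (fun h => hu (by rw [h])) (Option.some.inj hp)

lemma addChild_not_isLeaf_none (hnt : ∃ v : H.V, v ≠ H.root) :
    ¬ (addChild H n).IsLeaf none := by
  obtain ⟨v, hv⟩ := hnt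
  obtain ⟨c, hc1, hc2, -⟩ := H.exists_child hv
  rintro ⟨-, h2⟩
  exact h2 (some c) (fun h => (nomatch h)) (acParent_to_new H hc2 hc1)

lemma addChild_isInternal_none (hnt : ∃ v : H.V, v ≠ H.root) :
    (addChild H n).IsInternal none :=
  ⟨fun h => (nomatch h), addChild_not_isLeaf_none H n hnt⟩

lemma addChild_isInternal_some {v : H.V} :
    (addChild H n).IsInternal (some v) ↔ H.IsInternal v := by
  unfold TTMTree.IsInternal
  rw [addChild_isLeaf_some]
  have : (some v ≠ (addChild H n).root) ↔ v ≠ H.root := by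
    rw [addChild_root]
    exact ⟨fun h h' => h (by rw [h']), fun h h' => h (by injection h')⟩
  rw [this]

lemma addChild_iterate_lt {v : H.V} {k : ℕ} (hk : k < H.depth v) :
    (acParent H)^[k] (some v) = some (H.parent^[k] v) := by
  induction k with
  | zero => rfl
  | succ k ih =>
    have hne : H.parent^[k] v ≠ H.root := H.iterate_ne_root (by omega)
    have hne2 : H.parent (H.parent^[k] v) ≠ H.root := by
      rw [← Function.iterate_succ_apply' H.parent k v]
      exact H.iterate_ne_root hk
    rw [Function.iterate_succ_apply' (acParent H) k (some v), ih (by omega),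
      acParent_deep H hne hne2, Function.iterate_succ_apply' H.parent k v]

lemma addChild_iterate_eq {v : H.V} (hv : v ≠ H.root) :
    (acParent H)^[H.depth v] (some v) = none := by
  have hd : 1 ≤ H.depth v := by
    rcases Nat.eq_zero_or_pos (H.depth v) with h | h
    · exact absurd (H.depth_eq_zero_iff.mp h) hv
    · exact h
  have h2 : H.parent (H.parent^[H.depth v - 1] v) = H.root := by
    rw [← Function.iterate_succ_apply' H.parent (H.depth v - 1) v,
      show (H.depth v - 1).succ = H.depth v by omega]
    exact H.iterate_depth
  rw [show H.depth v = (H.depth v - 1) + 1 by omega,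
    Function.iterate_succ_apply' (acParent H) (H.depth v - 1) (some v),
    addChild_iterate_lt H (by omega),
    acParent_to_new H (H.iterate_ne_root (by omega)) h2]

lemma addChild_iterate_gt {v : H.V} (hv : v ≠ H.root) {k : ℕ} (hk : H.depth v < k) :
    (acParent H)^[k] (some v) = some H.root := by
  obtain ⟨j, rfl⟩ : ∃ j, k = (H.depth v + 1) + j := ⟨k - H.depth v - 1, by omega⟩
  induction j with
  | zero =>
    rw [Nat.add_zero, Function.iterate_succ_apply' (acParent H) (H.depth v) (some v),
      addChild_iterate_eq H hv, acParent_none]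
  | succ j ih =>
    rw [show H.depth v + 1 + (j+1) = (H.depth v + 1 + j) + 1 by omega,
      Function.iterate_succ_apply' (acParent H) (H.depth v + 1 + j) (some v),
      ih (by omega), acParent_root]

lemma addChild_isAncestor {v : H.V} (hv : v ≠ H.root) {u : Option H.V} :
    (addChild H n).IsAncestor u (some v) ↔
      u = none ∨ ∃ w, u = some w ∧ H.IsAncestor w v := by
  constructor
  · rintro ⟨k, rfl⟩
    rcases lt_trichotomy k (H.depth v) with h | h | h
    · exact Or.inr ⟨_, by rw [addChild_parent, addChild_iterate_lt H h], ⟨k, rfl⟩⟩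
    · subst h; rw [addChild_parent, addChild_iterate_eq H hv]; exact Or.inl rfl
    · rw [addChild_parent, addChild_iterate_gt H hv h]
      exact Or.inr ⟨H.root, rfl, H.isAncestor_root v⟩
  · rintro (rfl | ⟨w, rfl, hw⟩)
    · exact ⟨H.depth v, by rw [addChild_parent, addChild_iterate_eq H hv]⟩
    · rw [H.isAncestor_iff] at hw
      obtain ⟨k, hk, rfl⟩ := hw
      rcases lt_or_eq_of_le hk with h | h
      · exact ⟨k, by rw [addChild_parent, addChild_iterate_lt H h]⟩
      · refine ⟨H.depth v + 1, ?_⟩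
        rw [addChild_parent, addChild_iterate_gt H hv (by omega), h, H.iterate_depth]
end AddChild
namespace TTMTree
lemma mem_internals {N : ℕ} (H : TTMTree N) {v : H.V} :
    v ∈ H.internals ↔ H.IsInternal v := by
  classical
  rw [internals]
  simp
end TTMTree

section AddChild2

variable {N : ℕ} (H : TTMTree N) (n : Fin N) (c₀ : ℚ) (L K : Fin N → ℕ)

lemma addChild_out_none :
    (addChild H n).out c₀ L K none = ((K n : ℚ) / (L n : ℚ)) * c₀ := by
  have h1 : (none : Option H.V) ≠ (addChild H n).root := fun h => (nomatch h)
  rw [(addChild H n).out_ne_root c₀ L K h1]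
  have : (addChild H n).parent none = some H.root := rfl
  rw [this]
  have : some H.root = (addChild H n).root := rfl
  rw [this, (addChild H n).out_root, addChild_label_none]

lemma addChild_out_some {v : H.V} (hv : v ≠ H.root) :
    (addChild H n).out c₀ L K (some v) =
      H.out (((K n : ℚ) / (L n : ℚ)) * c₀) L K v := by
  generalize hd : H.depth v = d
  induction d using Nat.strong_induction_on generalizing v with
  | _ d ih =>
    have h1 : (some v) ≠ (addChild H n).root := fun h => hv (Option.some.inj h)
    rw [(addChild H n).out_ne_root c₀ L K h1, H.out_ne_root _ L K hv, addChild_label_some]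
    congr 1
    by_cases hp : H.parent v = H.root
    · rw [addChild_parent, acParent_to_new H hv hp, addChild_out_none, hp, H.out_root]
    · rw [addChild_parent, acParent_deep H hv hp]
      have hdp : H.depth (H.parent v) < d := by
        have := H.depth_parent hv; omega
      exact ih _ hdp hp rfl

lemma addChild_internals (hnt : ∃ v : H.V, v ≠ H.root) :
    (addChild H n).internals = insert none (H.internals.image some) := by
  ext u
  rw [TTMTree.mem_internals]
  cases u with
  | none =>
    simp only [Finset.mem_insert, true_or, iff_true]
    exact addChild_isInternal_none H n hnt
  | some w =>
    rw [addChild_isInternal_some]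
    simp only [Finset.mem_insert, Finset.mem_image]
    constructor
    · intro h
      exact Or.inr ⟨w, H.mem_internals.mpr h, rfl⟩
    · rintro (h | ⟨w', hw', hww⟩)
      · exact (nomatch h)
      · rw [← Option.some.inj hww]
        exact H.mem_internals.mp hw'

lemma addChild_cost (hnt : ∃ v : H.V, v ≠ H.root) :
    (addChild H n).cost c₀ L K =
      (K n : ℚ) * c₀ + H.cost (((K n : ℚ) / (L n : ℚ)) * c₀) L K := by
  rw [TTMTree.cost, addChild_internals H n hnt, Finset.sum_insert (by simp)]
  congr 1
  · rw [addChild_label_none]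
    have h1 : (addChild H n).parent none = some H.root := rfl
    have h2 : some H.root = (addChild H n).root := rfl
    rw [h1, h2, (addChild H n).out_root]
  · refine (Finset.sum_image (fun a _ b _ h => Option.some.inj h)).trans ?_
    apply Finset.sum_congr rfl
    intro v hv
    have hint : H.IsInternal v := H.mem_internals.mp hv
    rw [addChild_label_some]
    congr 1
    by_cases hp : H.parent v = H.root
    · rw [addChild_parent, acParent_to_new H hint.1 hp, addChild_out_none, hp, H.out_root]
    · rw [addChild_parent, acParent_deep H hint.1 hp, addChild_out_some H n c₀ L K hp]

lemma addChild_valid {P Q : Finset (Fin N)}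
    (hval : PartialValid (insert n P) Q H) (hnP : n ∉ P)
    (hcard : P.card + 2 ≤ N) (hQ : Q.Nonempty) :
    PartialValid P Q (addChild H n) := by
  obtain ⟨h1, h2, h3, h4⟩ := hval
  obtain ⟨q, hq⟩ := hQ
  obtain ⟨w₀, ⟨hw₀leaf, -⟩, -⟩ := h1 q hq
  have hnt : ∃ v : H.V, v ≠ H.root := ⟨w₀, hw₀leaf.1⟩
  refine ⟨?_, ?_, ?_, ?_⟩
  · intro m hm
    obtain ⟨v, ⟨hvleaf, hvlab⟩, huniq⟩ := h1 m hm
    refine ⟨some v, ⟨(addChild_isLeaf_some H n).mpr hvleaf, hvlab⟩, ?_⟩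
    rintro u ⟨huleaf, hulab⟩
    cases u with
    | none => exact absurd huleaf (addChild_not_isLeaf_none H n hnt)
    | some w =>
      rw [huniq w ⟨(addChild_isLeaf_some H n).mp huleaf, hulab⟩]
  · intro u huleaf
    cases u with
    | none => exact absurd huleaf (addChild_not_isLeaf_none H n hnt)
    | some w => exact h2 w ((addChild_isLeaf_some H n).mp huleaf)
  · intro u huint
    cases u with
    | none => exact hnP
    | some w =>
      have := h3 w ((addChild_isInternal_some H n).mp huint)
      rw [addChild_label_some]
      exact fun hmem => this (Finset.mem_insert_of_mem hmem)
  · intro u huleaf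
    cases u with
    | none => exact absurd huleaf (addChild_not_isLeaf_none H n hnt)
    | some v =>
      have hvleaf : H.IsLeaf v := (addChild_isLeaf_some H n).mp huleaf
      obtain ⟨A, hA, hAcard, hAcov⟩ := h4 v hvleaf
      refine ⟨insert none (A.image some), ?_, ?_, ?_⟩
      · intro u'
        cases u' with
        | none =>
          simp only [Finset.mem_insert, true_or, true_iff]
          exact ⟨(addChild_isAncestor H n hvleaf.1).mpr (Or.inl rfl),
            addChild_isInternal_none H n hnt⟩
        | some w =>
          simp only [Finset.mem_insert, Finset.mem_image]
          rw [addChild_isAncestor H n hvleaf.1, addChild_isInternal_some]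
          constructor
          · rintro (h | ⟨w', hw', hww⟩)
            · exact (nomatch h)
            · rw [← Option.some.inj hww]
              have := (hA w').mp hw'
              exact ⟨Or.inr ⟨w', rfl, this.1⟩, this.2⟩
          · rintro ⟨(h | ⟨w', hww, hanc⟩), hint⟩
            · exact (nomatch h)
            · refine Or.inr ⟨w, (hA w).mpr ⟨?_, hint⟩, rfl⟩
              rwa [Option.some.inj hww]
      · rw [Finset.card_insert_of_notMem (by simp),
          Finset.card_image_of_injective _ (Option.some_injective _), hAcard,
          Finset.card_insert_of_notMem hnP]
        omega
      · intro m hmP hmlab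
        by_cases hmn : m = n
        · exact ⟨none, Finset.mem_insert_self _ _, hmn.symm⟩
        · have : m ∉ insert n P := by simp [hmn, hmP]
          obtain ⟨u', hu', hlab⟩ := hAcov m this (by rwa [addChild_label_some] at hmlab)
          exact ⟨some u', Finset.mem_insert_of_mem (Finset.mem_image_of_mem _ hu'), hlab⟩

end AddChild2
section Glue

variable {N : ℕ} (H₁ H₂ : TTMTree N)

/-- Parent function for the glued tree. -/
noncomputable def glParent :
    H₁.V ⊕ {v : H₂.V // v ≠ H₂.root} → H₁.V ⊕ {v : H₂.V // v ≠ H₂.root} :=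
  fun x =>
    match x with
    | Sum.inl v => Sum.inl (H₁.parent v)
    | Sum.inr ⟨v, _⟩ =>
        if h : H₂.parent v = H₂.root then Sum.inl H₁.root
        else Sum.inr ⟨H₂.parent v, h⟩

lemma glParent_inl (v : H₁.V) : glParent H₁ H₂ (Sum.inl v) = Sum.inl (H₁.parent v) := rfl

lemma glParent_inr_root {v : H₂.V} (hv : v ≠ H₂.root) (h : H₂.parent v = H₂.root) :
    glParent H₁ H₂ (Sum.inr ⟨v, hv⟩) = Sum.inl H₁.root := by
  simp [glParent, h]

lemma glParent_inr_deep {v : H₂.V} (hv : v ≠ H₂.root) (h : H₂.parent v ≠ H₂.root) :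
    glParent H₁ H₂ (Sum.inr ⟨v, hv⟩) = Sum.inr ⟨H₂.parent v, h⟩ := by
  simp [glParent, h]

lemma glParent_iterate_inl (k : ℕ) (v : H₁.V) :
    (glParent H₁ H₂)^[k] (Sum.inl v) = Sum.inl (H₁.parent^[k] v) := by
  induction k with
  | zero => rfl
  | succ k ih =>
    rw [Function.iterate_succ_apply' (glParent H₁ H₂) k, ih, glParent_inl,
      Function.iterate_succ_apply' H₁.parent k]

/-- The tree obtained by gluing `H₁` and `H₂` at their roots. -/
@[reducible] noncomputable def glue : TTMTree N where
  V := H₁.V ⊕ {v : H₂.V // v ≠ H₂.root}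
  fintypeV := by
    letI : DecidablePred (fun v : H₂.V => v ≠ H₂.root) := fun v => instDecidableNot
    infer_instance
  decEqV := inferInstance
  root := Sum.inl H₁.root
  parent := glParent H₁ H₂
  parent_root := by rw [glParent_inl, H₁.parent_root]
  reaches_root := by
    intro x
    cases x with
    | inl v =>
      exact ⟨H₁.depth v, by rw [glParent_iterate_inl, H₁.iterate_depth]⟩
    | inr w =>
      obtain ⟨v, hv⟩ := w
      have key : ∀ d (v : H₂.V) (hv : v ≠ H₂.root), H₂.depth v = d →
          ∃ k, (glParent H₁ H₂)^[k] (Sum.inr ⟨v, hv⟩) = Sum.inl H₁.root := by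
        intro d
        induction d using Nat.strong_induction_on with
        | _ d ih =>
          intro v hv hd
          by_cases hp : H₂.parent v = H₂.root
          · exact ⟨1, by rw [Function.iterate_one, glParent_inr_root H₁ H₂ hv hp]⟩
          · obtain ⟨k, hk⟩ := ih (H₂.depth (H₂.parent v))
              (by rw [← hd, H₂.depth_parent hv]; omega) (H₂.parent v) hp rfl
            exact ⟨k + 1, by
              rw [Function.iterate_succ_apply, glParent_inr_deep H₁ H₂ hv hp, hk]⟩
      exact key _ v hv rfl
  label := fun x => Sum.elim H₁.label (fun w => H₂.label w.1) x

lemma glue_root : (glue H₁ H₂).root = Sum.inl H₁.root := rfl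

lemma glue_parent : (glue H₁ H₂).parent = glParent H₁ H₂ := rfl

lemma glue_label_inl (v : H₁.V) : (glue H₁ H₂).label (Sum.inl v) = H₁.label v := rfl

lemma glue_label_inr (w : {v : H₂.V // v ≠ H₂.root}) :
    (glue H₁ H₂).label (Sum.inr w) = H₂.label w.1 := rfl

lemma glue_iterate_inr_lt {v : H₂.V} (hv : v ≠ H₂.root) {k : ℕ} (hk : k < H₂.depth v) :
    (glParent H₁ H₂)^[k] (Sum.inr ⟨v, hv⟩) =
      Sum.inr ⟨H₂.parent^[k] v, H₂.iterate_ne_root hk⟩ := by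
  induction k with
  | zero => rfl
  | succ k ih =>
    have h2 : H₂.parent (H₂.parent^[k] v) ≠ H₂.root := by
      rw [← Function.iterate_succ_apply' H₂.parent k v]
      exact H₂.iterate_ne_root hk
    rw [Function.iterate_succ_apply' (glParent H₁ H₂) k, ih (by omega),
      glParent_inr_deep H₁ H₂ _ h2]
    congr 1
    apply Subtype.ext
    exact (Function.iterate_succ_apply' H₂.parent k v).symm

lemma glue_iterate_inr_ge {v : H₂.V} (hv : v ≠ H₂.root) {k : ℕ} (hk : H₂.depth v ≤ k) :
    (glParent H₁ H₂)^[k] (Sum.inr ⟨v, hv⟩) = Sum.inl H₁.root := by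
  have hd : 1 ≤ H₂.depth v := by
    rcases Nat.eq_zero_or_pos (H₂.depth v) with h | h
    · exact absurd (H₂.depth_eq_zero_iff.mp h) hv
    · exact h
  obtain ⟨j, rfl⟩ : ∃ j, k = H₂.depth v + j := ⟨k - H₂.depth v, by omega⟩
  induction j with
  | zero =>
    rw [Nat.add_zero, show H₂.depth v = (H₂.depth v - 1) + 1 by omega,
      Function.iterate_succ_apply' (glParent H₁ H₂) (H₂.depth v - 1),
      glue_iterate_inr_lt H₁ H₂ hv (by omega)]
    have hp : H₂.parent (H₂.parent^[H₂.depth v - 1] v) = H₂.root := by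
      rw [← Function.iterate_succ_apply' H₂.parent (H₂.depth v - 1) v,
        show (H₂.depth v - 1).succ = H₂.depth v by omega]
      exact H₂.iterate_depth
    rw [glParent_inr_root H₁ H₂ _ hp]
  | succ j ih =>
    rw [show H₂.depth v + (j + 1) = (H₂.depth v + j) + 1 by omega,
      Function.iterate_succ_apply' (glParent H₁ H₂) (H₂.depth v + j),
      ih (by omega), glParent_inl, H₁.parent_root]

lemma glue_isAncestor_inl {u : H₁.V ⊕ {v : H₂.V // v ≠ H₂.root}} {v : H₁.V} :
    (glue H₁ H₂).IsAncestor u (Sum.inl v) ↔ ∃ w, u = Sum.inl w ∧ H₁.IsAncestor w v := by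
  constructor
  · rintro ⟨k, rfl⟩
    exact ⟨H₁.parent^[k] v, by rw [show (glue H₁ H₂).parent = glParent H₁ H₂ from rfl,
      glParent_iterate_inl], ⟨k, rfl⟩⟩
  · rintro ⟨w, rfl, k, rfl⟩
    exact ⟨k, by rw [show (glue H₁ H₂).parent = glParent H₁ H₂ from rfl, glParent_iterate_inl]⟩

lemma glue_isAncestor_inr {u : H₁.V ⊕ {v : H₂.V // v ≠ H₂.root}} {v : H₂.V}
    (hv : v ≠ H₂.root) :
    (glue H₁ H₂).IsAncestor u (Sum.inr ⟨v, hv⟩) ↔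
      u = Sum.inl H₁.root ∨
        ∃ (w : H₂.V) (hw : w ≠ H₂.root), u = Sum.inr ⟨w, hw⟩ ∧ H₂.IsAncestor w v := by
  have hP : (glue H₁ H₂).parent = glParent H₁ H₂ := rfl
  constructor
  · rintro ⟨k, rfl⟩
    rcases lt_or_ge k (H₂.depth v) with h | h
    · rw [hP, glue_iterate_inr_lt H₁ H₂ hv h]
      exact Or.inr ⟨_, _, rfl, ⟨k, rfl⟩⟩
    · rw [hP, glue_iterate_inr_ge H₁ H₂ hv h]
      exact Or.inl rfl
  · rintro (rfl | ⟨w, hw, rfl, hanc⟩)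
    · exact ⟨H₂.depth v, by rw [hP, glue_iterate_inr_ge H₁ H₂ hv (le_refl _)]⟩
    · rw [H₂.isAncestor_iff] at hanc
      obtain ⟨k, hk, rfl⟩ := hanc
      have hklt : k < H₂.depth v := by
        rcases lt_or_eq_of_le hk with h | h
        · exact h
        · exfalso; subst h; exact hw H₂.iterate_depth
      exact ⟨k, by rw [hP, glue_iterate_inr_lt H₁ H₂ hv hklt]⟩

lemma glue_isLeaf_inl {v : H₁.V} :
    (glue H₁ H₂).IsLeaf (Sum.inl v) ↔ H₁.IsLeaf v := by
  constructor
  · rintro ⟨h1, h2⟩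
    refine ⟨fun h => h1 (by rw [h]), fun u hu hp => ?_⟩
    exact h2 (Sum.inl u) (fun h => hu (Sum.inl.inj h)) (by rw [glue_parent, glParent_inl, hp])
  · rintro ⟨h1, h2⟩
    refine ⟨fun h => h1 (Sum.inl.inj h), fun u hu hp => ?_⟩
    rw [glue_parent] at hp
    cases u with
    | inl w =>
      rw [glParent_inl] at hp
      exact h2 w (fun h => hu (by rw [h])) (Sum.inl.inj hp)
    | inr w =>
      obtain ⟨w, hw⟩ := w
      by_cases hq : H₂.parent w = H₂.root
      · rw [glParent_inr_root H₁ H₂ hw hq] at hp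
        exact h1 (Sum.inl.inj hp).symm
      · rw [glParent_inr_deep H₁ H₂ hw hq] at hp
        exact (nomatch hp)

lemma glue_isLeaf_inr {v : H₂.V} (hv : v ≠ H₂.root) :
    (glue H₁ H₂).IsLeaf (Sum.inr ⟨v, hv⟩) ↔ H₂.IsLeaf v := by
  constructor
  · rintro ⟨-, h2⟩
    refine ⟨hv, fun u hu hp => ?_⟩
    have hu' : u ≠ H₂.root := by
      rintro rfl; rw [H₂.parent_root] at hp; exact hv hp.symm
    have : H₂.parent u ≠ H₂.root := by rw [hp]; exact hv
    exact h2 (Sum.inr ⟨u, hu'⟩)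
      (fun h => hu (congrArg Subtype.val (Sum.inr.inj h)))
      (by rw [glue_parent, glParent_inr_deep H₁ H₂ hu' this]; congr 1; exact Subtype.ext hp)
  · rintro ⟨-, h2⟩
    refine ⟨fun h => (nomatch h), fun u hu hp => ?_⟩
    rw [glue_parent] at hp
    cases u with
    | inl w => rw [glParent_inl] at hp; exact (nomatch hp)
    | inr w =>
      obtain ⟨w, hw⟩ := w
      by_cases hq : H₂.parent w = H₂.root
      · rw [glParent_inr_root H₁ H₂ hw hq] at hp
        exact (nomatch hp)
      · rw [glParent_inr_deep H₁ H₂ hw hq] at hp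
        have : H₂.parent w = v := congrArg Subtype.val (Sum.inr.inj hp)
        exact h2 w (fun h => hu (by subst h; rfl)) this

lemma glue_isInternal_inl {v : H₁.V} :
    (glue H₁ H₂).IsInternal (Sum.inl v) ↔ H₁.IsInternal v := by
  unfold TTMTree.IsInternal
  rw [glue_isLeaf_inl]
  have : (Sum.inl v ≠ (glue H₁ H₂).root) ↔ v ≠ H₁.root :=
    ⟨fun h h' => h (by rw [h']), fun h h' => h (Sum.inl.inj h')⟩
  rw [this]

lemma glue_isInternal_inr {v : H₂.V} (hv : v ≠ H₂.root) :
    (glue H₁ H₂).IsInternal (Sum.inr ⟨v, hv⟩) ↔ H₂.IsInternal v := by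
  unfold TTMTree.IsInternal
  rw [glue_isLeaf_inr H₁ H₂ hv]
  have : (Sum.inr ⟨v, hv⟩ ≠ (glue H₁ H₂).root) ↔ True :=
    iff_true_intro (fun h => (nomatch h))
  rw [this, true_and]
  exact ⟨fun h => ⟨hv, h⟩, fun h => h.2⟩

variable (c₀ : ℚ) (L K : Fin N → ℕ)

lemma glue_out_inl (v : H₁.V) :
    (glue H₁ H₂).out c₀ L K (Sum.inl v) = H₁.out c₀ L K v := by
  generalize hd : H₁.depth v = d
  induction d using Nat.strong_induction_on generalizing v with
  | _ d ih =>
    by_cases hv : v = H₁.root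
    · subst hv
      rw [H₁.out_root]
      exact (glue H₁ H₂).out_root c₀ L K
    · rw [(glue H₁ H₂).out_ne_root c₀ L K (fun h => hv (Sum.inl.inj h)),
        H₁.out_ne_root c₀ L K hv, glue_label_inl]
      congr 1
      rw [show (glue H₁ H₂).parent (Sum.inl v) = Sum.inl (H₁.parent v) from rfl]
      exact ih _ (by rw [← hd, H₁.depth_parent hv]; omega) _ rfl

lemma glue_out_inr {v : H₂.V} (hv : v ≠ H₂.root) :
    (glue H₁ H₂).out c₀ L K (Sum.inr ⟨v, hv⟩) = H₂.out c₀ L K v := by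
  generalize hd : H₂.depth v = d
  induction d using Nat.strong_induction_on generalizing v with
  | _ d ih =>
    rw [(glue H₁ H₂).out_ne_root c₀ L K (v := Sum.inr ⟨v, hv⟩) (fun h => (nomatch h)),
      H₂.out_ne_root c₀ L K hv, glue_label_inr]
    congr 1
    by_cases hp : H₂.parent v = H₂.root
    · rw [show (glue H₁ H₂).parent (Sum.inr ⟨v, hv⟩) = glParent H₁ H₂ (Sum.inr ⟨v, hv⟩) from rfl,
        glParent_inr_root H₁ H₂ hv hp, hp, H₂.out_root]
      exact (glue H₁ H₂).out_root c₀ L K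
    · rw [show (glue H₁ H₂).parent (Sum.inr ⟨v, hv⟩) = glParent H₁ H₂ (Sum.inr ⟨v, hv⟩) from rfl,
        glParent_inr_deep H₁ H₂ hv hp]
      exact ih _ (by rw [← hd, H₂.depth_parent hv]; omega) _ rfl

end Glue
section Glue2

variable {N : ℕ} (H₁ H₂ : TTMTree N)

lemma glue_internals :
    (glue H₁ H₂).internals =
      (H₁.internals.image Sum.inl) ∪
        (H₂.internals.attach.image
          (fun a => Sum.inr ⟨a.1, (H₂.mem_internals.mp a.2).1⟩)) := by
  ext x
  rw [TTMTree.mem_internals, Finset.mem_union, Finset.mem_image, Finset.mem_image]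
  cases x with
  | inl v =>
    rw [glue_isInternal_inl]
    constructor
    · intro h
      exact Or.inl ⟨v, H₁.mem_internals.mpr h, rfl⟩
    · rintro (⟨w, hw, hww⟩ | ⟨w, -, hww⟩)
      · rw [← Sum.inl.inj hww]; exact H₁.mem_internals.mp hw
      · exact (nomatch hww)
  | inr w =>
    obtain ⟨v, hv⟩ := w
    rw [glue_isInternal_inr H₁ H₂ hv]
    constructor
    · intro h
      exact Or.inr ⟨⟨v, H₂.mem_internals.mpr h⟩, Finset.mem_attach _ _, rfl⟩
    · rintro (⟨u, -, huu⟩ | ⟨u, -, huu⟩)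
      · exact (nomatch huu)
      · have : u.1 = v := congrArg Subtype.val (Sum.inr.inj huu)
        rw [← this]
        exact H₂.mem_internals.mp u.2

lemma glue_cost (c₀ : ℚ) (L K : Fin N → ℕ) :
    (glue H₁ H₂).cost c₀ L K = H₁.cost c₀ L K + H₂.cost c₀ L K := by
  rw [TTMTree.cost, glue_internals, Finset.sum_union]
  · congr 1
    · refine (Finset.sum_image (fun a _ b _ h => Sum.inl.inj h)).trans ?_
      apply Finset.sum_congr rfl
      intro v hv
      rw [glue_label_inl, glue_parent, glParent_inl, glue_out_inl]
    · refine (Finset.sum_image ?_).trans ?_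
      · intro a _ b _ hab
        have h1 : (⟨a.1, (H₂.mem_internals.mp a.2).1⟩ : {v : H₂.V // v ≠ H₂.root})
            = ⟨b.1, (H₂.mem_internals.mp b.2).1⟩ := Sum.inr_injective hab
        have h2 : a.1 = b.1 := congrArg (fun w : {v : H₂.V // v ≠ H₂.root} => w.1) h1
        exact Subtype.ext h2
      · rw [TTMTree.cost]
        refine (Finset.sum_congr rfl ?_).trans (Finset.sum_attach H₂.internals
          (fun v => (K (H₂.label v) : ℚ) * H₂.out c₀ L K (H₂.parent v)))
        intro a _
        obtain ⟨⟨v, hvmem⟩, h⟩ : ∃ b : {x // x ∈ H₂.internals}, b = a := ⟨a, rfl⟩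
        subst h
        have hv : v ≠ H₂.root := (H₂.mem_internals.mp hvmem).1
        rw [glue_label_inr, glue_parent]
        congr 1
        by_cases hp : H₂.parent v = H₂.root
        · rw [glParent_inr_root H₁ H₂ hv hp, hp, H₂.out_root]
          exact (glue H₁ H₂).out_root c₀ L K
        · rw [glParent_inr_deep H₁ H₂ hv hp]
          exact glue_out_inr H₁ H₂ c₀ L K hp
  · rw [Finset.disjoint_left]
    rintro x hx hx'
    rw [Finset.mem_image] at hx hx'
    obtain ⟨a, -, rfl⟩ := hx
    obtain ⟨b, -, hb⟩ := hx'
    exact (nomatch hb)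

lemma glue_valid {P Q₁ Q₂ : Finset (Fin N)}
    (hv₁ : PartialValid P Q₁ H₁) (hv₂ : PartialValid P Q₂ H₂)
    (hdisj : Disjoint Q₁ Q₂) :
    PartialValid P (Q₁ ∪ Q₂) (glue H₁ H₂) := by
  obtain ⟨h11, h12, h13, h14⟩ := hv₁
  obtain ⟨h21, h22, h23, h24⟩ := hv₂
  refine ⟨?_, ?_, ?_, ?_⟩
  · intro m hm
    rw [Finset.mem_union] at hm
    rcases hm with hm | hm
    · obtain ⟨v, ⟨hvl, hvlab⟩, huniq⟩ := h11 m hm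
      refine ⟨Sum.inl v, ⟨(glue_isLeaf_inl H₁ H₂).mpr hvl, hvlab⟩, ?_⟩
      rintro u ⟨hul, hulab⟩
      cases u with
      | inl w =>
        rw [huniq w ⟨(glue_isLeaf_inl H₁ H₂).mp hul, hulab⟩]
      | inr w =>
        obtain ⟨w, hw⟩ := w
        have hQ2 : H₂.label w ∈ Q₂ := h22 w ((glue_isLeaf_inr H₁ H₂ hw).mp hul)
        rw [glue_label_inr] at hulab
        exact absurd hm (Finset.disjoint_right.mp hdisj (hulab ▸ hQ2))
    · obtain ⟨v, ⟨hvl, hvlab⟩, huniq⟩ := h21 m hm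
      have hvr : v ≠ H₂.root := hvl.1
      refine ⟨Sum.inr ⟨v, hvr⟩, ⟨(glue_isLeaf_inr H₁ H₂ hvr).mpr hvl, hvlab⟩, ?_⟩
      rintro u ⟨hul, hulab⟩
      cases u with
      | inl w =>
        have hQ1 : H₁.label w ∈ Q₁ := h12 w ((glue_isLeaf_inl H₁ H₂).mp hul)
        rw [glue_label_inl] at hulab
        exact absurd hm (Finset.disjoint_left.mp hdisj (hulab ▸ hQ1))
      | inr w =>
        obtain ⟨w, hw⟩ := w
        have := huniq w ⟨(glue_isLeaf_inr H₁ H₂ hw).mp hul, hulab⟩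
        subst this; rfl
  · intro u hul
    cases u with
    | inl w =>
      exact Finset.mem_union_left _ (h12 w ((glue_isLeaf_inl H₁ H₂).mp hul))
    | inr w =>
      obtain ⟨w, hw⟩ := w
      exact Finset.mem_union_right _ (h22 w ((glue_isLeaf_inr H₁ H₂ hw).mp hul))
  · intro u huint
    cases u with
    | inl w => exact h13 w ((glue_isInternal_inl H₁ H₂).mp huint)
    | inr w =>
      obtain ⟨w, hw⟩ := w
      exact h23 w ((glue_isInternal_inr H₁ H₂ hw).mp huint)
  · intro u hul
    cases u with
    | inl v =>
      have hvl : H₁.IsLeaf v := (glue_isLeaf_inl H₁ H₂).mp hul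
      obtain ⟨A, hA, hAcard, hAcov⟩ := h14 v hvl
      refine ⟨A.image Sum.inl, ?_, ?_, ?_⟩
      · intro x
        rw [Finset.mem_image]
        cases x with
        | inl w =>
          rw [glue_isAncestor_inl, glue_isInternal_inl]
          constructor
          · rintro ⟨a, ha, haa⟩
            rw [← Sum.inl.inj haa]
            have := (hA a).mp ha
            exact ⟨⟨a, rfl, this.1⟩, this.2⟩
          · rintro ⟨⟨a, haa, hanc⟩, hint⟩
            refine ⟨w, (hA w).mpr ⟨?_, hint⟩, rfl⟩
            rwa [← Sum.inl.inj haa] at hanc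
        | inr w =>
          constructor
          · rintro ⟨a, -, haa⟩
            exact absurd haa (fun h => (nomatch h))
          · rintro ⟨hanc, -⟩
            rw [glue_isAncestor_inl] at hanc
            obtain ⟨w', hww, -⟩ := hanc
            exact (nomatch hww)
      · rw [Finset.card_image_of_injective _ Sum.inl_injective, hAcard]
      · intro m hmP hm
        obtain ⟨a, ha, haa⟩ := hAcov m hmP hm
        exact ⟨Sum.inl a, Finset.mem_image_of_mem _ ha, haa⟩
    | inr w =>
      obtain ⟨v, hv⟩ := w
      have hvl : H₂.IsLeaf v := (glue_isLeaf_inr H₁ H₂ hv).mp hul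
      obtain ⟨A, hA, hAcard, hAcov⟩ := h24 v hvl
      have hmem : ∀ a ∈ A, a ≠ H₂.root := fun a ha => ((hA a).mp ha).2.1
      refine ⟨A.attach.image (fun a => Sum.inr ⟨a.1, hmem a.1 a.2⟩), ?_, ?_, ?_⟩
      · intro x
        rw [Finset.mem_image]
        cases x with
        | inl w =>
          constructor
          · rintro ⟨a, -, haa⟩
            exact absurd haa (fun h => (nomatch h))
          · rintro ⟨hanc, hint⟩
            rw [glue_isAncestor_inr H₁ H₂ hv] at hanc
            rcases hanc with h | ⟨a, ha, haa, -⟩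
            · exact absurd h hint.1
            · exact (nomatch haa)
        | inr w =>
          obtain ⟨w, hw⟩ := w
          rw [glue_isAncestor_inr H₁ H₂ hv, glue_isInternal_inr H₁ H₂ hw]
          constructor
          · rintro ⟨a, -, haa⟩
            have hval : a.1 = w := congrArg Subtype.val (Sum.inr.inj haa)
            have := (hA a.1).mp a.2
            rw [hval] at this
            exact ⟨Or.inr ⟨w, hw, rfl, this.1⟩, this.2⟩
          · rintro ⟨hanc, hint⟩
            rcases hanc with h | ⟨a, ha, haa, hanc⟩
            · exact (nomatch h)
            have hval : w = a := congrArg Subtype.val (Sum.inr.inj haa)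
            subst hval
            have hwA : w ∈ A := (hA w).mpr ⟨hanc, hint⟩
            exact ⟨⟨w, hwA⟩, Finset.mem_attach _ _, rfl⟩
      · rw [Finset.card_image_of_injective, Finset.card_attach, hAcard]
        intro a b hab
        have h1 : (⟨a.1, hmem a.1 a.2⟩ : {v : H₂.V // v ≠ H₂.root})
            = ⟨b.1, hmem b.1 b.2⟩ := Sum.inr_injective hab
        have h2 : a.1 = b.1 := congrArg (fun w : {v : H₂.V // v ≠ H₂.root} => w.1) h1
        exact Subtype.ext h2
      · intro m hmP hm
        obtain ⟨a, ha, haa⟩ := hAcov m hmP hm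
        exact ⟨Sum.inr ⟨a, hmem a ha⟩,
          Finset.mem_image_of_mem _ (Finset.mem_attach _ ⟨a, ha⟩), haa⟩

end Glue2
section Contract

variable {N : ℕ} (H : TTMTree N) (c : H.V)

/-- Parent function after removing the node `c` (the unique child of the
root): children of `c` are re-attached to the root. -/
noncomputable def ctParent (hc : c ≠ H.root) :
    {v : H.V // v ≠ c} → {v : H.V // v ≠ c} := fun x =>
  if h : H.parent x.1 = c then ⟨H.root, Ne.symm hc⟩ else ⟨H.parent x.1, h⟩

lemma ctParent_to_root (hc : c ≠ H.root) {v : H.V} (hv : v ≠ c) (h : H.parent v = c) :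
    ctParent H c hc ⟨v, hv⟩ = ⟨H.root, Ne.symm hc⟩ := dif_pos h

lemma ctParent_deep (hc : c ≠ H.root) {v : H.V} (hv : v ≠ c) (h : H.parent v ≠ c) :
    ctParent H c hc ⟨v, hv⟩ = ⟨H.parent v, h⟩ := dif_neg h

/-- in the presence of `honly`, a node other than `root` and `c` does not
have the root as parent -/
lemma ct_parent_ne_root (honly : ∀ u : H.V, u ≠ H.root → H.parent u = H.root → u = c)
    {v : H.V} (hv : v ≠ c) (hvr : v ≠ H.root)
    (h : H.parent v = H.root) : False := hv (honly v hvr h)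

/-- `c` is an ancestor of every node other than the root. -/
lemma ct_anc (honly : ∀ u : H.V, u ≠ H.root → H.parent u = H.root → u = c)
    {v : H.V} (hvr : v ≠ H.root) : H.IsAncestor c v := by
  obtain ⟨c', hc'1, hc'2, hc'3⟩ := H.exists_child hvr
  rwa [honly c' hc'2 hc'1] at hc'3

/-- The tree obtained from `H` by contracting the unique child `c` of the
root. -/
@[reducible] noncomputable def contract (hc : c ≠ H.root) : TTMTree N where
  V := {v : H.V // v ≠ c}
  fintypeV := by
    letI : DecidablePred (fun v : H.V => v ≠ c) := fun v => instDecidableNot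
    infer_instance
  decEqV := inferInstance
  root := ⟨H.root, Ne.symm hc⟩
  parent := ctParent H c hc
  parent_root := by
    rw [ctParent_deep H c hc _ (fun h => hc (by rw [← h, H.parent_root]))]
    exact Subtype.ext H.parent_root
  reaches_root := by
    rintro ⟨v, hv⟩
    have key : ∀ d (v : H.V) (hv : v ≠ c), H.depth v = d →
        ∃ k, (ctParent H c hc)^[k] ⟨v, hv⟩ = ⟨H.root, Ne.symm hc⟩ := by
      intro d
      induction d using Nat.strong_induction_on with
      | _ d ih =>
        intro v hv hd
        by_cases hvr : v = H.root
        · exact ⟨0, Subtype.ext hvr⟩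
        by_cases hp : H.parent v = c
        · exact ⟨1, by rw [Function.iterate_one, ctParent_to_root H c hc hv hp]⟩
        · obtain ⟨k, hk⟩ := ih (H.depth (H.parent v))
            (by rw [← hd, H.depth_parent hvr]; omega) (H.parent v) hp rfl
          exact ⟨k + 1, by
            rw [Function.iterate_succ_apply, ctParent_deep H c hc hv hp, hk]⟩
    exact key _ v hv rfl
  label := fun x => H.label x.1

lemma contract_root (hc : c ≠ H.root) : (contract H c hc).root = ⟨H.root, Ne.symm hc⟩ := rfl

lemma contract_parent (hc : c ≠ H.root) : (contract H c hc).parent = ctParent H c hc := rfl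

lemma contract_label (hc : c ≠ H.root) (x : {v : H.V // v ≠ c}) :
    (contract H c hc).label x = H.label x.1 := rfl

lemma contract_isLeaf (hc : c ≠ H.root) (hpc : H.parent c = H.root) {v : H.V} (hv : v ≠ c) :
    (contract H c hc).IsLeaf ⟨v, hv⟩ ↔ H.IsLeaf v := by
  constructor
  · rintro ⟨h1, h2⟩
    have hvr : v ≠ H.root := fun h => h1 (Subtype.ext h)
    refine ⟨hvr, fun u hu hp => ?_⟩
    have huc : u ≠ c := by
      rintro rfl
      rw [hpc] at hp
      exact hvr hp.symm
    have : ctParent H c hc ⟨u, huc⟩ = ⟨v, hv⟩ := by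
      rw [ctParent_deep H c hc huc (by rw [hp]; exact hv)]
      exact Subtype.ext hp
    exact h2 ⟨u, huc⟩ (fun h => hu (congrArg Subtype.val h)) this
  · rintro ⟨h1, h2⟩
    refine ⟨fun h => h1 (congrArg Subtype.val h), ?_⟩
    rintro ⟨u, hu⟩ huv hp
    rw [contract_parent] at hp
    by_cases hq : H.parent u = c
    · rw [ctParent_to_root H c hc hu hq] at hp
      exact h1 (congrArg Subtype.val hp).symm
    · rw [ctParent_deep H c hc hu hq] at hp
      exact h2 u (fun h => huv (Subtype.ext h)) (congrArg Subtype.val hp)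

lemma contract_isInternal (hc : c ≠ H.root) (hpc : H.parent c = H.root) {v : H.V} (hv : v ≠ c) :
    (contract H c hc).IsInternal ⟨v, hv⟩ ↔ H.IsInternal v := by
  unfold TTMTree.IsInternal
  rw [contract_isLeaf H c hc hpc]
  have : ((⟨v, hv⟩ : {v : H.V // v ≠ c}) ≠ (contract H c hc).root) ↔ v ≠ H.root :=
    ⟨fun h h' => h (Subtype.ext h'), fun h h' => h (congrArg Subtype.val h')⟩
  rw [this]

lemma contract_isAncestor (hc : c ≠ H.root) (hpc : H.parent c = H.root) {u v : H.V} (hu : u ≠ c) (hv : v ≠ c) :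
    (contract H c hc).IsAncestor ⟨u, hu⟩ ⟨v, hv⟩ ↔ H.IsAncestor u v := by
  constructor
  · rintro ⟨k, hk⟩
    rw [contract_parent] at hk
    induction k generalizing v with
    | zero =>
      have hvu : v = u := congrArg Subtype.val hk
      subst hvu
      exact H.isAncestor_refl v
    | succ k ih =>
      rw [Function.iterate_succ_apply] at hk
      by_cases hp : H.parent v = c
      · rw [ctParent_to_root H c hc hv hp] at hk
        have := ih (Ne.symm hc) hk
        have hur : u = H.root := H.eq_root_of_isAncestor this
        subst hur
        exact H.isAncestor_root v
      · rw [ctParent_deep H c hc hv hp] at hk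
        exact H.isAncestor_trans (ih hp hk) H.isAncestor_parent
  · intro hanc
    rw [H.isAncestor_iff] at hanc
    obtain ⟨k, -, hk⟩ := hanc
    induction k generalizing v with
    | zero => exact ⟨0, Subtype.ext hk⟩
    | succ k ih =>
      rw [Function.iterate_succ_apply] at hk
      by_cases hp : H.parent v = c
      · rw [hp] at hk
        have hk1 : k ≠ 0 := by
          rintro rfl
          exact hu hk.symm
        have hur : u = H.root := by
          rw [← hk, show k = (k-1) + 1 by omega, Function.iterate_succ_apply, hpc,
            H.parent_iterate_root]
        subst hur
        refine ⟨1, ?_⟩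
        rw [contract_parent, Function.iterate_one, ctParent_to_root H c hc hv hp]
      · obtain ⟨j, hj⟩ := ih hp hk
        refine ⟨j + 1, ?_⟩
        rw [contract_parent] at hj ⊢
        rw [Function.iterate_succ_apply, ctParent_deep H c hc hv hp, hj]

lemma contract_out (hc : c ≠ H.root) (hpc : H.parent c = H.root)
    (honly : ∀ u : H.V, u ≠ H.root → H.parent u = H.root → u = c)
    (c₀ : ℚ) (L K : Fin N → ℕ) {v : H.V} (hv : v ≠ c) (hvr : v ≠ H.root) :
    (contract H c hc).out (((K (H.label c) : ℚ) / (L (H.label c) : ℚ)) * c₀) L K ⟨v, hv⟩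
      = H.out c₀ L K v := by
  generalize hd : H.depth v = d
  induction d using Nat.strong_induction_on generalizing v with
  | _ d ih =>
    have h1 : (⟨v, hv⟩ : {v : H.V // v ≠ c}) ≠ (contract H c hc).root :=
      fun h => hvr (congrArg Subtype.val h)
    rw [(contract H c hc).out_ne_root _ L K h1, H.out_ne_root c₀ L K hvr, contract_label]
    congr 1
    by_cases hp : H.parent v = c
    · rw [contract_parent, ctParent_to_root H c hc hv hp]
      have : (contract H c hc).out (((K (H.label c) : ℚ) / (L (H.label c) : ℚ)) * c₀) L K
          (⟨H.root, Ne.symm hc⟩ : {v : H.V // v ≠ c}) =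
          ((K (H.label c) : ℚ) / (L (H.label c) : ℚ)) * c₀ :=
        (contract H c hc).out_root _ L K
      rw [this, hp, H.out_ne_root c₀ L K hc, hpc, H.out_root]
    · have hpr : H.parent v ≠ H.root := fun h => ct_parent_ne_root H c honly hv hvr h
      rw [contract_parent, ctParent_deep H c hc hv hp]
      exact ih _ (by rw [← hd, H.depth_parent hvr]; omega) hp hpr rfl

lemma contract_cost (hc : c ≠ H.root) (hpc : H.parent c = H.root)
    (honly : ∀ u : H.V, u ≠ H.root → H.parent u = H.root → u = c)
    (c₀ : ℚ) (L K : Fin N → ℕ) (hcint : H.IsInternal c) :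
    H.cost c₀ L K =
      (K (H.label c) : ℚ) * c₀ +
        (contract H c hc).cost (((K (H.label c) : ℚ) / (L (H.label c) : ℚ)) * c₀) L K := by
  have hcmem : c ∈ H.internals := H.mem_internals.mpr hcint
  rw [TTMTree.cost, ← Finset.add_sum_erase _ _ hcmem, hpc, H.out_root]
  congr 1
  rw [TTMTree.cost]
  refine (Finset.sum_bij' (i := fun (v : H.V) (hv : v ∈ H.internals.erase c) =>
      (⟨v, (Finset.mem_erase.mp hv).1⟩ : {v : H.V // v ≠ c}))
    (j := fun x hx => x.1) ?_ ?_ ?_ ?_ ?_)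
  · intro v hv
    rw [TTMTree.mem_internals,
      contract_isInternal H c hc hpc (Finset.mem_erase.mp hv).1]
    exact H.mem_internals.mp (Finset.mem_erase.mp hv).2
  · rintro ⟨v, hv⟩ hx
    rw [Finset.mem_erase]
    refine ⟨hv, H.mem_internals.mpr ?_⟩
    exact (contract_isInternal H c hc hpc hv).mp ((contract H c hc).mem_internals.mp hx)
  · intro v hv; rfl
  · rintro ⟨v, hv⟩ hx; rfl
  · intro v hv
    obtain ⟨hvc, hvmem⟩ := Finset.mem_erase.mp hv
    have hvint : H.IsInternal v := H.mem_internals.mp hvmem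
    rw [contract_label]
    congr 1
    by_cases hp : H.parent v = c
    · rw [contract_parent, ctParent_to_root H c hc hvc hp]
      have : (contract H c hc).out (((K (H.label c) : ℚ) / (L (H.label c) : ℚ)) * c₀) L K
          (⟨H.root, Ne.symm hc⟩ : {v : H.V // v ≠ c}) =
          ((K (H.label c) : ℚ) / (L (H.label c) : ℚ)) * c₀ :=
        (contract H c hc).out_root _ L K
      rw [this, hp, H.out_ne_root c₀ L K hc, hpc, H.out_root]
    · have hpr : H.parent v ≠ H.root :=
        fun h => ct_parent_ne_root H c honly hvc hvint.1 h
      rw [contract_parent, ctParent_deep H c hc hvc hp]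
      exact (contract_out H c hc hpc honly c₀ L K hp hpr).symm

end Contract
lemma rootCard_insert {N : ℕ} (L K : Fin N → ℕ) {P : Finset (Fin N)} {n : Fin N}
    (hn : n ∉ P) (hL : (L n : ℚ) ≠ 0) :
    rootCard L K (insert n P) = ((K n : ℚ) / (L n : ℚ)) * rootCard L K P := by
  rw [rootCard, rootCard, Finset.prod_insert hn, Finset.compl_insert]
  rw [← Finset.mul_prod_erase Pᶜ (fun m => (L m : ℚ)) (Finset.mem_compl.mpr hn)]
  field_simp

section ContractValid

variable {N : ℕ} (H : TTMTree N) (c : H.V)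

lemma contract_valid {P Q : Finset (Fin N)} (hval : PartialValid P Q H)
    (hc : c ≠ H.root) (hpc : H.parent c = H.root)
    (honly : ∀ u : H.V, u ≠ H.root → H.parent u = H.root → u = c)
    (hcint : H.IsInternal c)
    (hlab : ∀ u : H.V, H.IsInternal u → u ≠ c → H.label u ≠ H.label c) :
    PartialValid (insert (H.label c) P) Q (contract H c hc) := by
  obtain ⟨h1, h2, h3, h4⟩ := hval
  have hcP : H.label c ∉ P := h3 c hcint
  refine ⟨?_, ?_, ?_, ?_⟩
  · intro m hm
    obtain ⟨v, ⟨hvl, hvlab⟩, huniq⟩ := h1 m hm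
    have hvc : v ≠ c := by
      rintro rfl
      exact hcint.2 hvl
    refine ⟨⟨v, hvc⟩, ⟨(contract_isLeaf H c hc hpc hvc).mpr hvl, hvlab⟩, ?_⟩
    rintro ⟨u, hu⟩ ⟨hul, hulab⟩
    exact Subtype.ext (huniq u ⟨(contract_isLeaf H c hc hpc hu).mp hul, hulab⟩)
  · rintro ⟨u, hu⟩ hul
    exact h2 u ((contract_isLeaf H c hc hpc hu).mp hul)
  · rintro ⟨u, hu⟩ huint
    have huint' : H.IsInternal u := (contract_isInternal H c hc hpc hu).mp huint
    rw [contract_label, Finset.mem_insert, not_or]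
    exact ⟨hlab u huint' hu, h3 u huint'⟩
  · rintro ⟨v, hvc⟩ hvl
    have hvl' : H.IsLeaf v := (contract_isLeaf H c hc hpc hvc).mp hvl
    obtain ⟨A, hA, hAcard, hAcov⟩ := h4 v hvl'
    have hcA : c ∈ A := (hA c).mpr ⟨ct_anc H c honly hvl'.1, hcint⟩
    refine ⟨(A.erase c).attach.image
      (fun a => (⟨a.1, (Finset.mem_erase.mp a.2).1⟩ : {v : H.V // v ≠ c})), ?_, ?_, ?_⟩
    · rintro ⟨u, hu⟩
      rw [Finset.mem_image]
      constructor
      · rintro ⟨a, -, haa⟩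
        have hau : a.1 = u := congrArg Subtype.val haa
        have haA : a.1 ∈ A := (Finset.mem_erase.mp a.2).2
        rw [hau] at haA
        have := (hA u).mp haA
        exact ⟨(contract_isAncestor H c hc hpc hu hvc).mpr this.1,
          (contract_isInternal H c hc hpc hu).mpr this.2⟩
      · rintro ⟨hanc, hint⟩
        have hmem : u ∈ A.erase c := Finset.mem_erase.mpr ⟨hu,
          (hA u).mpr ⟨(contract_isAncestor H c hc hpc hu hvc).mp hanc,
            (contract_isInternal H c hc hpc hu).mp hint⟩⟩
        exact ⟨⟨u, hmem⟩, Finset.mem_attach _ _, rfl⟩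
    · rw [Finset.card_image_of_injective, Finset.card_attach,
        Finset.card_erase_of_mem hcA, hAcard,
        Finset.card_insert_of_notMem hcP]
      · omega
      · intro a b hab
        have hab' : (⟨a.1, (Finset.mem_erase.mp a.2).1⟩ : {v : H.V // v ≠ c})
            = ⟨b.1, (Finset.mem_erase.mp b.2).1⟩ := hab
        have h2' : a.1 = b.1 := congrArg (fun w : {v : H.V // v ≠ c} => w.1) hab'
        exact Subtype.ext h2'
    · intro m hmP hmlab
      rw [Finset.mem_insert, not_or] at hmP
      obtain ⟨u, huA, hulab⟩ := hAcov m hmP.2 hmlab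
      have huc : u ≠ c := by
        rintro rfl
        exact hmP.1 hulab.symm
      exact ⟨⟨u, huc⟩,
        Finset.mem_image_of_mem _ (Finset.mem_attach _ ⟨u, Finset.mem_erase.mpr ⟨huc, huA⟩⟩),
        hulab⟩

end ContractValid
section Restrict

variable {N : ℕ} (H : TTMTree N) (p : H.V → Prop)

lemma p_iterate (hpar : ∀ v, p v → p (H.parent v)) (k : ℕ) (v : H.V) (hv : p v) :
    p (H.parent^[k] v) := by
  induction k with
  | zero => exact hv
  | succ k ih => rw [Function.iterate_succ_apply' H.parent k v]; exact hpar _ ih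

/-- Parent function of the restriction of `H` to a parent-closed set. -/
noncomputable def rsParent (hpar : ∀ v, p v → p (H.parent v)) :
    {v : H.V // p v} → {v : H.V // p v} :=
  fun x => ⟨H.parent x.1, hpar x.1 x.2⟩

lemma rsParent_iterate (hpar : ∀ v, p v → p (H.parent v)) (k : ℕ) (v : H.V) (hv : p v) :
    (rsParent H p hpar)^[k] ⟨v, hv⟩ = ⟨H.parent^[k] v, p_iterate H p hpar k v hv⟩ := by
  induction k with
  | zero => rfl
  | succ k ih =>
    rw [Function.iterate_succ_apply' (rsParent H p hpar) k, ih]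
    apply Subtype.ext
    exact (Function.iterate_succ_apply' H.parent k v).symm

/-- The restriction of `H` to a parent-closed set of nodes containing the
root. -/
@[reducible] noncomputable def restrict (hroot : p H.root) (hpar : ∀ v, p v → p (H.parent v)) :
    TTMTree N where
  V := {v : H.V // p v}
  fintypeV := by
    letI := Classical.decPred p
    infer_instance
  decEqV := inferInstance
  root := ⟨H.root, hroot⟩
  parent := rsParent H p hpar
  parent_root := Subtype.ext H.parent_root
  reaches_root := by
    rintro ⟨v, hv⟩
    exact ⟨H.depth v, by
      rw [rsParent_iterate H p hpar]
      exact Subtype.ext H.iterate_depth⟩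
  label := fun x => H.label x.1

variable (hroot : p H.root) (hpar : ∀ v, p v → p (H.parent v))

lemma restrict_root : (restrict H p hroot hpar).root = ⟨H.root, hroot⟩ := rfl

lemma restrict_parent : (restrict H p hroot hpar).parent = rsParent H p hpar := rfl

lemma restrict_label (x : {v : H.V // p v}) :
    (restrict H p hroot hpar).label x = H.label x.1 := rfl

lemma restrict_isAncestor {u v : H.V} (hu : p u) (hv : p v) :
    (restrict H p hroot hpar).IsAncestor ⟨u, hu⟩ ⟨v, hv⟩ ↔ H.IsAncestor u v := by
  constructor
  · rintro ⟨k, hk⟩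
    rw [restrict_parent, rsParent_iterate H p hpar] at hk
    exact ⟨k, congrArg Subtype.val hk⟩
  · rintro ⟨k, hk⟩
    refine ⟨k, ?_⟩
    rw [restrict_parent, rsParent_iterate H p hpar]
    exact Subtype.ext hk

lemma restrict_isLeaf (hchild : ∀ v, p v → v ≠ H.root → ∀ u, H.parent u = v → p u)
    {v : H.V} (hv : p v) :
    (restrict H p hroot hpar).IsLeaf ⟨v, hv⟩ ↔ H.IsLeaf v := by
  constructor
  · rintro ⟨h1, h2⟩
    have hvr : v ≠ H.root := fun h => h1 (Subtype.ext h)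
    refine ⟨hvr, fun u hu hp => ?_⟩
    have hpu : p u := hchild v hv hvr u hp
    exact h2 ⟨u, hpu⟩ (fun h => hu (congrArg Subtype.val h))
      (by rw [restrict_parent]; exact Subtype.ext hp)
  · rintro ⟨h1, h2⟩
    refine ⟨fun h => h1 (congrArg Subtype.val h), ?_⟩
    rintro ⟨u, hu⟩ huv hp
    rw [restrict_parent] at hp
    exact h2 u (fun h => huv (Subtype.ext h)) (congrArg Subtype.val hp)

lemma restrict_isInternal (hchild : ∀ v, p v → v ≠ H.root → ∀ u, H.parent u = v → p u)
    {v : H.V} (hv : p v) :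
    (restrict H p hroot hpar).IsInternal ⟨v, hv⟩ ↔ H.IsInternal v := by
  unfold TTMTree.IsInternal
  rw [restrict_isLeaf H p hroot hpar hchild hv]
  have : ((⟨v, hv⟩ : {v : H.V // p v}) ≠ (restrict H p hroot hpar).root) ↔ v ≠ H.root :=
    ⟨fun h h' => h (Subtype.ext h'), fun h h' => h (congrArg Subtype.val h')⟩
  rw [this]

lemma restrict_out (c₀ : ℚ) (L K : Fin N → ℕ) {v : H.V} (hv : p v) :
    (restrict H p hroot hpar).out c₀ L K ⟨v, hv⟩ = H.out c₀ L K v := by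
  generalize hd : H.depth v = d
  induction d using Nat.strong_induction_on generalizing v with
  | _ d ih =>
    by_cases hvr : v = H.root
    · subst hvr
      rw [H.out_root]
      exact (restrict H p hroot hpar).out_root c₀ L K
    · rw [(restrict H p hroot hpar).out_ne_root c₀ L K
        (fun h => hvr (congrArg Subtype.val h)), H.out_ne_root c₀ L K hvr, restrict_label]
      congr 1
      have hstep : (restrict H p hroot hpar).parent ⟨v, hv⟩ = ⟨H.parent v, hpar v hv⟩ := rfl
      rw [hstep]
      exact ih _ (by rw [← hd, H.depth_parent hvr]; omega) _ rfl

lemma restrict_cost (hchild : ∀ v, p v → v ≠ H.root → ∀ u, H.parent u = v → p u)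
    [DecidablePred p] (c₀ : ℚ) (L K : Fin N → ℕ) :
    (restrict H p hroot hpar).cost c₀ L K =
      ∑ v ∈ H.internals.filter p,
        (K (H.label v) : ℚ) * H.out c₀ L K (H.parent v) := by
  rw [TTMTree.cost]
  refine Finset.sum_bij' (i := fun (x : {v : H.V // p v})
      (hx : x ∈ (restrict H p hroot hpar).internals) => x.1)
    (j := fun v hv => ⟨v, (Finset.mem_filter.mp hv).2⟩) ?_ ?_ ?_ ?_ ?_
  · rintro ⟨v, hv⟩ hx
    rw [Finset.mem_filter]
    exact ⟨H.mem_internals.mpr ((restrict_isInternal H p hroot hpar hchild hv).mp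
      ((restrict H p hroot hpar).mem_internals.mp hx)), hv⟩
  · intro v hv
    rw [TTMTree.mem_internals, restrict_isInternal H p hroot hpar hchild]
    exact H.mem_internals.mp (Finset.mem_filter.mp hv).1
  · rintro ⟨v, hv⟩ hx; rfl
  · intro v hv; rfl
  · rintro ⟨v, hv⟩ hx
    rw [restrict_label, restrict_parent]
    congr 1
    exact restrict_out H p hroot hpar c₀ L K (hpar v hv)

lemma restrict_valid (hchild : ∀ v, p v → v ≠ H.root → ∀ u, H.parent u = v → p u)
    {P Q Q' : Finset (Fin N)} (hval : PartialValid P Q H)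
    (hQ' : ∀ m, m ∈ Q' ↔ m ∈ Q ∧ ∃ v, H.IsLeaf v ∧ H.label v = m ∧ p v) :
    PartialValid P Q' (restrict H p hroot hpar) := by
  obtain ⟨h1, h2, h3, h4⟩ := hval
  refine ⟨?_, ?_, ?_, ?_⟩
  · intro m hm
    obtain ⟨hmQ, v, hvl, hvlab, hpv⟩ := (hQ' m).mp hm
    refine ⟨⟨v, hpv⟩, ⟨(restrict_isLeaf H p hroot hpar hchild hpv).mpr hvl, hvlab⟩, ?_⟩
    rintro ⟨u, hu⟩ ⟨hul, hulab⟩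
    obtain ⟨w, -, huniq⟩ := h1 m hmQ
    have e1 := huniq u ⟨(restrict_isLeaf H p hroot hpar hchild hu).mp hul, hulab⟩
    have e2 := huniq v ⟨hvl, hvlab⟩
    exact Subtype.ext (e1.trans e2.symm)
  · rintro ⟨u, hu⟩ hul
    have hul' : H.IsLeaf u := (restrict_isLeaf H p hroot hpar hchild hu).mp hul
    exact (hQ' _).mpr ⟨h2 u hul', u, hul', rfl, hu⟩
  · rintro ⟨u, hu⟩ huint
    exact h3 u ((restrict_isInternal H p hroot hpar hchild hu).mp huint)
  · rintro ⟨v, hv⟩ hvl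
    have hvl' : H.IsLeaf v := (restrict_isLeaf H p hroot hpar hchild hv).mp hvl
    obtain ⟨A, hA, hAcard, hAcov⟩ := h4 v hvl'
    have hpA : ∀ a ∈ A, p a := by
      intro a ha
      obtain ⟨⟨k, hk⟩, -⟩ := (hA a).mp ha
      rw [← hk]
      exact p_iterate H p hpar k v hv
    refine ⟨A.attach.image (fun a => (⟨a.1, hpA a.1 a.2⟩ : {v : H.V // p v})), ?_, ?_, ?_⟩
    · rintro ⟨u, hu⟩
      rw [Finset.mem_image]
      constructor
      · rintro ⟨a, -, haa⟩
        have hau : a.1 = u := congrArg Subtype.val haa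
        have haA := (hA a.1).mp a.2
        rw [hau] at haA
        exact ⟨(restrict_isAncestor H p hroot hpar hu hv).mpr haA.1,
          (restrict_isInternal H p hroot hpar hchild hu).mpr haA.2⟩
      · rintro ⟨hanc, hint⟩
        have hmem : u ∈ A := (hA u).mpr
          ⟨(restrict_isAncestor H p hroot hpar hu hv).mp hanc,
           (restrict_isInternal H p hroot hpar hchild hu).mp hint⟩
        exact ⟨⟨u, hmem⟩, Finset.mem_attach _ _, rfl⟩
    · rw [Finset.card_image_of_injective, Finset.card_attach, hAcard]
      intro a b hab
      have hab' : (⟨a.1, hpA a.1 a.2⟩ : {v : H.V // p v}) = ⟨b.1, hpA b.1 b.2⟩ := hab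
      exact Subtype.ext (congrArg (fun w : {v : H.V // p v} => w.1) hab')
    · intro m hmP hmlab
      obtain ⟨u, huA, hulab⟩ := hAcov m hmP hmlab
      exact ⟨⟨u, hpA u huA⟩,
        Finset.mem_image_of_mem _ (Finset.mem_attach _ ⟨u, huA⟩), hulab⟩

end Restrict
/-- **The recurrence satisfied by the optimal partial TTM-tree cost.**
Let `opt` assign to every admissible triple `(P', Q', R')` the minimum cost of
a partial TTM-tree for it (hypothesis `hopt`, stated as an `IsLeast`).  Let
`(P, Q, R)` be pairwise disjoint with `P ∪ Q ∪ R = {1, …, N}` and `|Q| ≥ 1`.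
Then: (a) if `|Q| = 1` and `R = ∅` then `opt P Q R = 0`; (b) otherwise
`opt P Q R` is the minimum of the set of available options, consisting of the
reuse options `K n · |T[P]| + opt (P ∪ {n}) Q (R \ {n})` for `n ∈ R`, and the
split options `opt P Q₁ R + opt P Q₂ R` for partitions `Q = Q₁ ⊎ Q₂` with
`Q₁, Q₂ ≠ ∅`. -/
theorem opt_partial_recurrence {N : ℕ} (hN : 2 ≤ N) (L K : Fin N → ℕ)
    (hK : ∀ n, 1 ≤ K n) (hKL : ∀ n, K n ≤ L n)
    (opt : Finset (Fin N) → Finset (Fin N) → Finset (Fin N) → ℚ)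
    (hopt : ∀ P' Q' R' : Finset (Fin N), Disjoint P' Q' → Q'.Nonempty →
      IsLeast {c : ℚ | ∃ H : TTMTree N, PartialValid P' Q' H ∧
        pcost L K P' H = c} (opt P' Q' R'))
    (P Q R : Finset (Fin N))
    (hPQ : Disjoint P Q) (hPR : Disjoint P R) (hQR : Disjoint Q R)
    (hcover : P ∪ Q ∪ R = Finset.univ) (hQ : 1 ≤ Q.card) :
    (Q.card = 1 ∧ R = ∅ → opt P Q R = 0) ∧
    (¬(Q.card = 1 ∧ R = ∅) →
      IsLeast
        ({x : ℚ | ∃ n ∈ R,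
            x = (K n : ℚ) * rootCard L K P + opt (insert n P) Q (R.erase n)} ∪
         {x : ℚ | ∃ Q₁ Q₂ : Finset (Fin N), Q₁ ∪ Q₂ = Q ∧ Disjoint Q₁ Q₂ ∧
            Q₁.Nonempty ∧ Q₂.Nonempty ∧ x = opt P Q₁ R + opt P Q₂ R})
        (opt P Q R)) := by
  classical
  have hQne : Q.Nonempty := Finset.card_pos.mp (by omega)
  have hLn : ∀ n, (L n : ℚ) ≠ 0 := fun n =>
    Nat.cast_ne_zero.mpr (by have := hK n; have := hKL n; omega)
  have hcards : P.card + Q.card + R.card = N := by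
    have h1 : (P ∪ Q ∪ R).card = N := by
      rw [hcover, Finset.card_univ, Fintype.card_fin]
    rw [Finset.card_union_of_disjoint (Finset.disjoint_union_left.mpr ⟨hPR, hQR⟩),
      Finset.card_union_of_disjoint hPQ] at h1
    exact h1
  constructor
  · -- part (a)
    rintro ⟨hQ1, rfl⟩
    obtain ⟨n, rfl⟩ := Finset.card_eq_one.mp hQ1
    have hnP : n ∉ P := Finset.disjoint_right.mp hPQ (Finset.mem_singleton_self n)
    have huniv : insert n P = Finset.univ := by
      ext m
      simp only [Finset.mem_insert, Finset.mem_univ, iff_true]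
      have hm : m ∈ P ∪ {n} ∪ (∅ : Finset (Fin N)) := hcover ▸ Finset.mem_univ m
      simp only [Finset.union_empty, Finset.mem_union, Finset.mem_singleton] at hm
      tauto
    have h0 : IsLeast {c : ℚ | ∃ H : TTMTree N, PartialValid P {n} H ∧
        pcost L K P H = c} 0 := by
      constructor
      · exact ⟨twoNode N n, twoNode_valid P n hnP huniv, twoNode_pcost L K P n⟩
      · rintro x ⟨H, -, rfl⟩
        exact pcost_nonneg L K P H
    exact (hopt P {n} ∅ hPQ hQne).unique h0
  · -- part (b)
    intro hcase
    -- upper bound: opt is ≤ every option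
    have hub : ∀ x ∈ ({x : ℚ | ∃ n ∈ R,
            x = (K n : ℚ) * rootCard L K P + opt (insert n P) Q (R.erase n)} ∪
         {x : ℚ | ∃ Q₁ Q₂ : Finset (Fin N), Q₁ ∪ Q₂ = Q ∧ Disjoint Q₁ Q₂ ∧
            Q₁.Nonempty ∧ Q₂.Nonempty ∧ x = opt P Q₁ R + opt P Q₂ R}),
        opt P Q R ≤ x := by
      rintro x (⟨n, hnR, rfl⟩ | ⟨Q₁, Q₂, hQu, hQd, h1ne, h2ne, rfl⟩)
      · -- reuse option
        have hnP : n ∉ P := Finset.disjoint_right.mp hPR hnR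
        have hnQ : n ∉ Q := Finset.disjoint_left.mp hQR.symm hnR
        have hPQ' : Disjoint (insert n P) Q :=
          Finset.disjoint_insert_left.mpr ⟨hnQ, hPQ⟩
        obtain ⟨⟨H', hH'valid, hH'cost⟩, -⟩ := hopt (insert n P) Q (R.erase n) hPQ' hQne
        have hcard : P.card + 2 ≤ N := by
          have h1 : ((insert n P) ∪ Q).card ≤ N := by
            have h2 := Finset.card_le_univ ((insert n P) ∪ Q)
            simpa [Finset.card_univ, Fintype.card_fin] using h2
          rw [Finset.card_union_of_disjoint hPQ',
            Finset.card_insert_of_notMem hnP] at h1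
          omega
        have hvalid : PartialValid P Q (addChild H' n) :=
          addChild_valid H' n hH'valid hnP hcard hQne
        obtain ⟨q1, hq1⟩ := id hQne
        obtain ⟨w1, ⟨hw1leaf, -⟩, -⟩ := hH'valid.1 q1 hq1
        have hnt : ∃ v : H'.V, v ≠ H'.root := ⟨w1, hw1leaf.1⟩
        have hcost : pcost L K P (addChild H' n) =
            (K n : ℚ) * rootCard L K P + opt (insert n P) Q (R.erase n) := by
          rw [pcost, addChild_cost H' n (rootCard L K P) L K hnt,
            ← rootCard_insert L K hnP (hLn n), ← pcost, hH'cost]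
        exact (hopt P Q R hPQ hQne).2 ⟨addChild H' n, hvalid, hcost⟩
      · -- split option
        have hQ₁sub : Q₁ ⊆ Q := hQu ▸ Finset.subset_union_left
        have hQ₂sub : Q₂ ⊆ Q := hQu ▸ Finset.subset_union_right
        obtain ⟨⟨H₁, hH₁valid, hH₁cost⟩, -⟩ :=
          hopt P Q₁ R (hPQ.mono_right hQ₁sub) h1ne
        obtain ⟨⟨H₂, hH₂valid, hH₂cost⟩, -⟩ :=
          hopt P Q₂ R (hPQ.mono_right hQ₂sub) h2ne
        have hvalid : PartialValid P Q (glue H₁ H₂) := by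
          rw [← hQu]
          exact glue_valid H₁ H₂ hH₁valid hH₂valid hQd
        have hcost : pcost L K P (glue H₁ H₂) = opt P Q₁ R + opt P Q₂ R := by
          rw [pcost, glue_cost, ← pcost, ← pcost, hH₁cost, hH₂cost]
        exact (hopt P Q R hPQ hQne).2 ⟨glue H₁ H₂, hvalid, hcost⟩
    -- membership: opt attains one of the options
    obtain ⟨⟨H, hHvalid, hHcost⟩, -⟩ := hopt P Q R hPQ hQne
    obtain ⟨q0, hq0⟩ := id hQne
    obtain ⟨w0, ⟨hw0leaf, -⟩, -⟩ := hHvalid.1 q0 hq0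
    obtain ⟨c, hc_par, hc_ne, -⟩ := H.exists_child hw0leaf.1
    refine ⟨?_, hub⟩
    by_cases honly : ∀ u : H.V, u ≠ H.root → H.parent u = H.root → u = c
    · by_cases hcleaf : H.IsLeaf c
      · -- the whole tree is {root, c}: contradiction with hcase
        exfalso
        have hall : ∀ v : H.V, v ≠ H.root → v = c := by
          intro v hvr
          by_contra hvc
          obtain ⟨k, hk⟩ := ct_anc H c honly hvr
          have hk0 : k ≠ 0 := by rintro rfl; exact hvc hk
          have hpu : H.parent (H.parent^[k-1] v) = c := by
            have h' : H.parent^[(k-1)+1] v = c := by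
              rw [show (k-1)+1 = k by omega]; exact hk
            rwa [Function.iterate_succ_apply'] at h'
          have huc : H.parent^[k-1] v ≠ c := by
            intro h
            rw [h, hc_par] at hpu
            exact hc_ne hpu.symm
          exact hcleaf.2 _ huc hpu
        have hQsing : Q = {H.label c} := by
          apply Finset.eq_singleton_iff_unique_mem.mpr
          refine ⟨hHvalid.2.1 c hcleaf, ?_⟩
          intro m hm
          obtain ⟨v, ⟨hvl, hvlab⟩, -⟩ := hHvalid.1 m hm
          rw [← hvlab, hall v hvl.1]
        obtain ⟨A, hA, hAcard, -⟩ := hHvalid.2.2.2 c hcleaf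
        have hAempty : A = ∅ := by
          ext u
          simp only [Finset.notMem_empty, iff_false]
          intro hu
          obtain ⟨-, huint⟩ := (hA u).mp hu
          exact huint.2 ((hall u huint.1) ▸ hcleaf)
        rw [hAempty, Finset.card_empty] at hAcard
        have hQ1 : Q.card = 1 := by rw [hQsing, Finset.card_singleton]
        have hR0 : R = ∅ := by
          apply Finset.card_eq_zero.mp
          omega
        exact hcase ⟨hQ1, hR0⟩
      · -- c is internal: reuse decomposition
        have hcint : H.IsInternal c := ⟨hc_ne, hcleaf⟩
        set n := H.label c with hn
        have hnP : n ∉ P := hHvalid.2.2.1 c hcint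
        have hnQ : n ∉ Q := by
          intro hmem
          obtain ⟨v, ⟨hvl, hvlab⟩, -⟩ := hHvalid.1 n hmem
          obtain ⟨A, hA, -, him, -⟩ := valid_A hHvalid hPQ hvl
          have hcA : c ∈ A := (hA c).mpr ⟨ct_anc H c honly hvl.1, hcint⟩
          have h1 : n ∈ A.image H.label := Finset.mem_image_of_mem _ hcA
          rw [him, Finset.mem_compl] at h1
          exact h1 (hvlab ▸ Finset.mem_insert_self _ _)
        have hnR : n ∈ R := by
          have h1 : n ∈ P ∪ Q ∪ R := hcover ▸ Finset.mem_univ n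
          simp only [Finset.mem_union] at h1
          tauto
        have hlab : ∀ u : H.V, H.IsInternal u → u ≠ c → H.label u ≠ n := by
          intro u huint huc
          obtain ⟨w, hwleaf, hwanc⟩ := H.exists_leaf_desc huint.1
          obtain ⟨A, hA, -, -, hinj⟩ := valid_A hHvalid hPQ hwleaf
          have huA : u ∈ A := (hA u).mpr ⟨hwanc, huint⟩
          have hcA : c ∈ A := (hA c).mpr ⟨ct_anc H c honly hwleaf.1, hcint⟩
          exact fun h => huc (hinj huA hcA h)
        have hvalid' : PartialValid (insert n P) Q (contract H c hc_ne) :=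
          contract_valid H c hHvalid hc_ne hc_par honly hcint hlab
        have hPQ'' : Disjoint (insert n P) Q :=
          Finset.disjoint_insert_left.mpr ⟨hnQ, hPQ⟩
        have hle : opt (insert n P) Q (R.erase n) ≤
            pcost L K (insert n P) (contract H c hc_ne) :=
          (hopt (insert n P) Q (R.erase n) hPQ'' hQne).2
            ⟨contract H c hc_ne, hvalid', rfl⟩
        have hco : pcost L K P H =
            (K n : ℚ) * rootCard L K P + pcost L K (insert n P) (contract H c hc_ne) := by
          rw [pcost, pcost, rootCard_insert L K hnP (hLn n)]
          exact contract_cost H c hc_ne hc_par honly (rootCard L K P) L K hcint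
        refine Set.mem_union_left _ ⟨n, hnR, le_antisymm ?_ ?_⟩
        · exact hub _ (Set.mem_union_left _ ⟨n, hnR, rfl⟩)
        · rw [← hHcost, hco]
          linarith
    · -- two children: split decomposition
      push_neg at honly
      obtain ⟨c₂, hc₂r, hc₂par, hc₂c⟩ := honly
      set p : H.V → Prop := fun v => H.IsAncestor c v ∨ v = H.root with hp
      set p2 : H.V → Prop := fun v => ¬ H.IsAncestor c v with hp2
      have hroot1 : p H.root := Or.inr rfl
      have hpar1 : ∀ v, p v → p (H.parent v) := by
        rintro v (⟨k, hk⟩ | rfl)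
        · rcases Nat.eq_zero_or_pos k with rfl | hkpos
          · right
            have hvc : v = c := hk
            rw [hvc, hc_par]
          · left
            refine ⟨k - 1, ?_⟩
            have h' : H.parent^[(k-1)+1] v = c := by
              rw [show (k-1)+1 = k by omega]; exact hk
            rwa [Function.iterate_succ_apply] at h'
        · right; exact H.parent_root
      have hchild1 : ∀ v, p v → v ≠ H.root → ∀ u, H.parent u = v → p u := by
        rintro v (hanc | rfl) hvr u hu
        · exact Or.inl (H.isAncestor_trans hanc (hu ▸ H.isAncestor_parent))
        · exact absurd rfl hvr
      have hroot2 : p2 H.root := by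
        intro hanc
        exact hc_ne (H.eq_root_of_isAncestor hanc)
      have hpar2 : ∀ v, p2 v → p2 (H.parent v) := by
        intro v hv hanc
        obtain ⟨k, hk⟩ := hanc
        exact hv ⟨k + 1, by rwa [Function.iterate_succ_apply]⟩
      have hchild2 : ∀ v, p2 v → v ≠ H.root → ∀ u, H.parent u = v → p2 u := by
        intro v hv hvr u hu hanc
        obtain ⟨k, hk⟩ := hanc
        rcases Nat.eq_zero_or_pos k with rfl | hkpos
        · have huc : u = c := hk
          rw [huc, hc_par] at hu
          exact hvr hu.symm
        · refine hv ⟨k - 1, ?_⟩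
          have h' : H.parent^[(k-1)+1] u = c := by
            rw [show (k-1)+1 = k by omega]; exact hk
          rw [Function.iterate_succ_apply, hu] at h'
          exact h'
      set Q₁ : Finset (Fin N) :=
        Q.filter (fun m => ∃ v, H.IsLeaf v ∧ H.label v = m ∧ p v) with hQ₁
      set Q₂ : Finset (Fin N) :=
        Q.filter (fun m => ∃ v, H.IsLeaf v ∧ H.label v = m ∧ p2 v) with hQ₂
      have hQ₁c : ∀ m, m ∈ Q₁ ↔ m ∈ Q ∧ ∃ v, H.IsLeaf v ∧ H.label v = m ∧ p v :=
        fun m => Finset.mem_filter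
      have hQ₂c : ∀ m, m ∈ Q₂ ↔ m ∈ Q ∧ ∃ v, H.IsLeaf v ∧ H.label v = m ∧ p2 v :=
        fun m => Finset.mem_filter
      have hQu : Q₁ ∪ Q₂ = Q := by
        ext m
        rw [Finset.mem_union, hQ₁c, hQ₂c]
        constructor
        · rintro (⟨h, -⟩ | ⟨h, -⟩) <;> exact h
        · intro hm
          obtain ⟨v, ⟨hvl, hvlab⟩, -⟩ := hHvalid.1 m hm
          by_cases hanc : H.IsAncestor c v
          · exact Or.inl ⟨hm, v, hvl, hvlab, Or.inl hanc⟩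
          · exact Or.inr ⟨hm, v, hvl, hvlab, hanc⟩
      have hQd : Disjoint Q₁ Q₂ := by
        rw [Finset.disjoint_left]
        intro m hm1 hm2
        obtain ⟨hmQ, v1, hv1l, hv1lab, hpv1⟩ := (hQ₁c m).mp hm1
        obtain ⟨-, v2, hv2l, hv2lab, hpv2⟩ := (hQ₂c m).mp hm2
        obtain ⟨w, -, huniq⟩ := hHvalid.1 m hmQ
        have he : v1 = v2 := (huniq v1 ⟨hv1l, hv1lab⟩).trans (huniq v2 ⟨hv2l, hv2lab⟩).symm
        subst he
        rcases hpv1 with hanc | hroot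
        · exact hpv2 hanc
        · exact hv1l.1 hroot
      have h1ne : Q₁.Nonempty := by
        obtain ⟨w, hwleaf, hwanc⟩ := H.exists_leaf_desc hc_ne
        exact ⟨H.label w, (hQ₁c _).mpr ⟨hHvalid.2.1 w hwleaf,
          w, hwleaf, rfl, Or.inl hwanc⟩⟩
      have h2ne : Q₂.Nonempty := by
        obtain ⟨w, hwleaf, hwanc⟩ := H.exists_leaf_desc hc₂r
        refine ⟨H.label w, (hQ₂c _).mpr ⟨hHvalid.2.1 w hwleaf, w, hwleaf, rfl, ?_⟩⟩
        intro hanc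
        have e1 := H.child_ancestor_eq hc_par hc_ne hanc
        have e2 := H.child_ancestor_eq hc₂par hc₂r hwanc
        exact hc₂c (e1.symm.trans e2).symm
      -- cost decomposition
      have hcostsplit : pcost L K P H =
          pcost L K P (restrict H p hroot1 hpar1) +
            pcost L K P (restrict H p2 hroot2 hpar2) := by
        rw [pcost, pcost, pcost, TTMTree.cost,
          restrict_cost H p hroot1 hpar1 hchild1 (rootCard L K P) L K,
          restrict_cost H p2 hroot2 hpar2 hchild2 (rootCard L K P) L K]
        rw [← Finset.sum_filter_add_sum_filter_not H.internals p]
        congr 1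
        apply Finset.sum_congr
        · apply Finset.filter_congr
          intro v hv
          have hvint : H.IsInternal v := H.mem_internals.mp hv
          rw [hp, hp2]
          simp only [not_or]
          constructor
          · rintro ⟨h1, -⟩; exact h1
          · intro h1; exact ⟨h1, hvint.1⟩
        · intro v _; rfl
      have hval1 : PartialValid P Q₁ (restrict H p hroot1 hpar1) :=
        restrict_valid H p hroot1 hpar1 hchild1 hHvalid hQ₁c
      have hval2 : PartialValid P Q₂ (restrict H p2 hroot2 hpar2) :=
        restrict_valid H p2 hroot2 hpar2 hchild2 hHvalid hQ₂c
      have hle1 : opt P Q₁ R ≤ pcost L K P (restrict H p hroot1 hpar1) :=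
        (hopt P Q₁ R (hPQ.mono_right (hQu ▸ Finset.subset_union_left)) h1ne).2
          ⟨_, hval1, rfl⟩
      have hle2 : opt P Q₂ R ≤ pcost L K P (restrict H p2 hroot2 hpar2) :=
        (hopt P Q₂ R (hPQ.mono_right (hQu ▸ Finset.subset_union_right)) h2ne).2
          ⟨_, hval2, rfl⟩
      refine Set.mem_union_right _ ⟨Q₁, Q₂, hQu, hQd, h1ne, h2ne, le_antisymm ?_ ?_⟩
      · exact hub _ (Set.mem_union_right _ ⟨Q₁, Q₂, hQu, hQd, h1ne, h2ne, rfl⟩)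
      · rw [← hHcost, hcostsplit]
        linarith
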